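/- arXiv:0801.2132 — 8 statements merged into one kernel-verified Lean document; each statement's English description precedes it below -/
import Mathlib

section
/- If X and Y are asymorphic metric spaces (i.e., there is a surjective bornologous multi-map Φ : X ⇒ Y with surjective bornologous inverse), then there exist single-valued bornologous maps f : X → Y and g : Y → X with sup_{x∈X} dist(g(f(x)), x) < ∞ and sup_{y∈Y} dist(f(g(y)), y) < ∞; in particular X and Y are coarsely equivalent. -/
/-- The image of a set under a multi-map `Φ ⊆ X × Y`. -/
def MultiImage {X Y : Type*} (Φ : Set (X × Y)) (A : Set X) : Set Y :=
  {y | ∃ a ∈ A, (a, y) ∈ Φ}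

/-- A multi-map `Φ ⊆ X × Y` between metric spaces is bornologous if for every `ε > 0`
there is `δ > 0` such that every `A ⊆ X` with `diam A < ε` has `diam (Φ(A)) < δ`. -/
def MultiBornologous {X Y : Type*} [MetricSpace X] [MetricSpace Y]
    (Φ : Set (X × Y)) : Prop :=
  ∀ ε : ℝ, 0 < ε → ∃ δ : ℝ, 0 < δ ∧ ∀ A : Set X,
    EMetric.diam A < ENNReal.ofReal ε →
      EMetric.diam (MultiImage Φ A) < ENNReal.ofReal δ

/-- The inverse of a multi-map. -/
def MultiInv {X Y : Type*} (Φ : Set (X × Y)) : Set (Y × X) :=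
  {p | (p.2, p.1) ∈ Φ}

private lemma key_dist {Z : Type*} [MetricSpace Z] (S : Set Z) (δ : ℝ) (a b : Z)
    (ha : a ∈ S) (hb : b ∈ S) (hS : EMetric.diam S < ENNReal.ofReal δ) : dist a b ≤ δ := by
  have h1 : edist a b < ENNReal.ofReal δ := lt_of_le_of_lt (EMetric.edist_le_diam_of_mem ha hb) hS
  exact le_of_lt (edist_lt_ofReal.mp h1)

private lemma pair_diam {Z : Type*} [MetricSpace Z] (a b : Z) (ε : ℝ) (h : dist a b < ε) :
    EMetric.diam ({a, b} : Set Z) < ENNReal.ofReal ε := by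
  rw [show EMetric.diam ({a, b} : Set Z) = edist a b from EMetric.diam_pair, edist_dist]
  exact (ENNReal.ofReal_lt_ofReal_iff (lt_of_le_of_lt dist_nonneg h)).mpr h

/-- If `Φ : X ⇒ Y` is a surjective bornologous multi-map with surjective bornologous
inverse, then there are single-valued bornologous maps `f : X → Y`, `g : Y → X` with
`sup_x dist (g (f x)) x < ∞` and `sup_y dist (f (g y)) y < ∞`; in particular `X` and
`Y` are coarsely equivalent. -/
theorem stmt5 {X Y : Type*} [MetricSpace X] [MetricSpace Y]
    (Φ : Set (X × Y))
    (hΦsurj : ∀ y : Y, ∃ x : X, (x, y) ∈ Φ)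
    (hΦinvsurj : ∀ x : X, ∃ y : Y, (x, y) ∈ Φ)
    (hΦ : MultiBornologous Φ) (hΦinv : MultiBornologous (MultiInv Φ)) :
    ∃ f : X → Y, ∃ g : Y → X,
      (∀ ε : ℝ, ∃ δ : ℝ, ∀ x x' : X, dist x x' ≤ ε → dist (f x) (f x') ≤ δ) ∧
      (∀ ε : ℝ, ∃ δ : ℝ, ∀ y y' : Y, dist y y' ≤ ε → dist (g y) (g y') ≤ δ) ∧
      (∃ C : ℝ, (∀ x : X, dist (g (f x)) x ≤ C) ∧ (∀ y : Y, dist (f (g y)) y ≤ C)) := by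
  classical
  set f : X → Y := fun x => Classical.choose (hΦinvsurj x) with hf
  set g : Y → X := fun y => Classical.choose (hΦsurj y) with hg
  have hfmem : ∀ x : X, (x, f x) ∈ Φ := fun x => Classical.choose_spec (hΦinvsurj x)
  have hgmem : ∀ y : Y, (g y, y) ∈ Φ := fun y => Classical.choose_spec (hΦsurj y)
  refine ⟨f, g, ?_, ?_, ?_⟩
  · intro ε
    obtain ⟨δ, hδ, hδ'⟩ := hΦ (max ε 0 + 1) (by positivity)
    refine ⟨δ, fun x x' h => ?_⟩
    have hd : EMetric.diam ({x, x'} : Set X) < ENNReal.ofReal (max ε 0 + 1) :=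
      pair_diam _ _ _ (lt_of_le_of_lt h (lt_of_le_of_lt (le_max_left ε 0) (lt_add_one _)))
    exact key_dist (MultiImage Φ {x, x'}) δ (f x) (f x') ⟨x, by simp, hfmem x⟩ ⟨x', by simp, hfmem x'⟩ (hδ' _ hd)
  · intro ε
    obtain ⟨δ, hδ, hδ'⟩ := hΦinv (max ε 0 + 1) (by positivity)
    refine ⟨δ, fun y y' h => ?_⟩
    have hd : EMetric.diam ({y, y'} : Set Y) < ENNReal.ofReal (max ε 0 + 1) :=
      pair_diam _ _ _ (lt_of_le_of_lt h (lt_of_le_of_lt (le_max_left ε 0) (lt_add_one _)))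
    exact key_dist (MultiImage (MultiInv Φ) {y, y'}) δ (g y) (g y') ⟨y, by simp, hgmem y⟩ ⟨y', by simp, hgmem y'⟩ (hδ' _ hd)
  · obtain ⟨δ₁, hδ₁, hδ₁'⟩ := hΦ 1 one_pos
    obtain ⟨δ₂, hδ₂, hδ₂'⟩ := hΦinv 1 one_pos
    refine ⟨max δ₁ δ₂, fun x => ?_, fun y => ?_⟩
    · have hd : EMetric.diam ({f x} : Set Y) < ENNReal.ofReal 1 := by
        rw [show EMetric.diam ({f x} : Set Y) = 0 from EMetric.diam_singleton]
        simp
      have := hδ₂' {f x} hd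
      exact le_trans (key_dist (MultiImage (MultiInv Φ) {f x}) δ₂ (g (f x)) x ⟨f x, rfl, hgmem (f x)⟩ ⟨f x, rfl, hfmem x⟩ this)
        (le_max_right _ _)
    · have hd : EMetric.diam ({g y} : Set X) < ENNReal.ofReal 1 := by
        rw [show EMetric.diam ({g y} : Set X) = 0 from EMetric.diam_singleton]
        simp
      have := hδ₁' {g y} hd
      exact le_trans (key_dist (MultiImage Φ {g y}) δ₁ (f (g y)) y ⟨g y, rfl, hfmem (g y)⟩ ⟨g y, rfl, hgmem y⟩ this)
        (le_max_left _ _)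
end

section
/- If metric spaces X and Y are coarsely equivalent via bornologous maps f : X → Y and g : Y → X with dist(g∘f, id_X) ≤ R and dist(f∘g, id_Y) ≤ R, then X and Y contain large subspaces X' ⊆ X and Y' ⊆ Y and a bijection h : X' → Y' such that both h and h^{-1} are bornologous. -/
/-- A map between metric spaces is bornologous. -/
def BornMap {X Y : Type*} [MetricSpace X] [MetricSpace Y] (f : X → Y) : Prop :=
  ∀ ε : ℝ, ∃ δ : ℝ, ∀ a b : X, dist a b ≤ ε → dist (f a) (f b) ≤ δ

/-- A subset `L` of a metric space is large if there is `r ∈ ℝ` such that every point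
of the space is at distance `< r` from `L`. -/
def IsLargeSubset {X : Type*} [MetricSpace X] (L : Set X) : Prop :=
  ∃ r : ℝ, ∀ x : X, ∃ l ∈ L, dist x l < r

/-- If `X, Y` are coarsely equivalent via bornologous maps `f, g` with
`dist(g∘f, id) ≤ R` and `dist(f∘g, id) ≤ R`, then `X` and `Y` contain large subspaces
`X' ⊆ X`, `Y' ⊆ Y` and a bijection `h : X' → Y'` such that both `h` and `h⁻¹` are
bornologous. -/
theorem stmt6 {X Y : Type*} [MetricSpace X] [MetricSpace Y]
    (f : X → Y) (g : Y → X) (R : ℝ)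
    (hf : BornMap f) (hg : BornMap g)
    (hgf : ∀ x : X, dist (g (f x)) x ≤ R) (hfg : ∀ y : Y, dist (f (g y)) y ≤ R) :
    ∃ X' : Set X, ∃ Y' : Set Y, IsLargeSubset X' ∧ IsLargeSubset Y' ∧
      ∃ h : X' ≃ Y',
        (∀ ε : ℝ, ∃ δ : ℝ, ∀ a b : X', dist (a : X) (b : X) ≤ ε →
          dist (h a : Y) (h b : Y) ≤ δ) ∧
        (∀ ε : ℝ, ∃ δ : ℝ, ∀ a b : Y', dist (a : Y) (b : Y) ≤ ε →
          dist (h.symm a : X) (h.symm b : X) ≤ δ) := by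
  classical
  -- section of f on its range
  set s : Y → X := fun y => if h : ∃ x, f x = y then h.choose else g y with hs
  have hsec : ∀ y ∈ Set.range f, f (s y) = y := by
    intro y hy
    simp only [hs]
    have hy' : ∃ x, f x = y := hy
    rw [dif_pos hy']
    exact hy'.choose_spec
  refine ⟨s '' Set.range f, Set.range f, ?_, ?_, ?_⟩
  · -- X' large
    refine ⟨2 * R + 1, fun x => ?_⟩
    refine ⟨s (f x), ⟨f x, ⟨x, rfl⟩, rfl⟩, ?_⟩
    have h1 : f (s (f x)) = f x := hsec _ ⟨x, rfl⟩
    have h2 : dist (g (f (s (f x)))) (s (f x)) ≤ R := hgf _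
    rw [h1] at h2
    have h3 : dist (g (f x)) x ≤ R := hgf x
    calc dist x (s (f x)) ≤ dist x (g (f x)) + dist (g (f x)) (s (f x)) := dist_triangle _ _ _
      _ ≤ R + R := add_le_add (by rwa [dist_comm]) h2
      _ < 2 * R + 1 := by linarith
  · -- Y' large
    refine ⟨R + 1, fun y => ?_⟩
    exact ⟨f (g y), ⟨g y, rfl⟩, by rw [dist_comm]; linarith [hfg y]⟩
  · refine ⟨⟨fun x => ⟨f x.1, ⟨x.1, rfl⟩⟩, fun y => ⟨s y.1, ⟨y.1, y.2, rfl⟩⟩, ?_, ?_⟩, ?_, ?_⟩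
    · rintro ⟨x, y, hy, rfl⟩
      ext
      have : f (s y) = y := hsec y hy
      simp only [this]
    · rintro ⟨y, hy⟩
      ext
      exact hsec y hy
    · intro ε
      obtain ⟨δ, hδ⟩ := hf ε
      exact ⟨δ, fun a b hab => hδ _ _ hab⟩
    · intro ε
      obtain ⟨δ, hδ⟩ := hg ε
      refine ⟨R + δ + R, ?_⟩
      rintro ⟨a, ha⟩ ⟨b, hb⟩ hab
      simp only [Equiv.coe_fn_symm_mk]
      have h1 : dist (g (f (s a))) (s a) ≤ R := hgf _
      rw [hsec a ha] at h1
      have h2 : dist (g (f (s b))) (s b) ≤ R := hgf _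
      rw [hsec b hb] at h2
      have h3 : dist (g a) (g b) ≤ δ := hδ _ _ hab
      calc dist (s a) (s b) ≤ dist (s a) (g a) + dist (g a) (g b) + dist (g b) (s b) :=
            dist_triangle4 _ _ _ _
        _ ≤ R + δ + R := by rw [dist_comm (s a)]; exact add_le_add (add_le_add h1 h3) h2
end

section
/- If T is a tower and S = T(k→) is the level subtower consisting of all elements whose level lies in the range of a strictly increasing sequence (k_n)_{n∈ω} with k_0 = 1, then the map next_S : [T] → [S] is an asymorphism between the bases, with respect to the path metrics of T and S respectively. -/
/-- Let `T` be a tower and `S = T(k)` the level subtower of all elements whose level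
lies in the range of a strictly increasing sequence `k` with `k 0 = 1`.  Then the map
`next_S : [T] → [S]` is an asymorphism between the bases: it is a bijection between
the base of `T` and the base of `S` which is bornologous in both directions with
respect to the path metric `d_T` of `T` and the path metric `d_S` of `S` (computed
from the level function `levS` of `S`, where `levS x = n + 1` whenever `lev x = k n`,
and the least upper bound in `S` of two elements is `next` of their least upper bound
in `T`). -/
theorem stmt11 {T : Type*} [PartialOrder T]
    (lev : T → ℕ) (lub : T → T → T)
    (hwf : WellFounded ((· < ·) : T → T → Prop))
    (hlub : ∀ x y : T, IsLUB {x, y} (lub x y))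
    (hchain : ∀ x : T, IsChain (· ≤ ·) {y : T | x ≤ y})
    (hlev : ∀ a x : T, IsMin x → x ≤ a → Nat.card (Set.Icc x a) = lev a)
    (k : ℕ → ℕ) (hk : StrictMono k) (hk0 : k 0 = 1)
    (S : Set T) (hS : S = {x : T | ∃ n : ℕ, lev x = k n})
    (next : T → T)
    (hnext : ∀ x : T, next x ∈ S ∧ x ≤ next x ∧ ∀ s ∈ S, x ≤ s → next x ≤ s)
    (levS : T → ℕ) (hlevS : ∀ (x : T) (n : ℕ), lev x = k n → levS x = n + 1) :
    ∀ dT dS : T → T → ℝ,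
      dT = (fun x y => 2 * (lev (lub x y) : ℝ) - (lev x : ℝ) - (lev y : ℝ)) →
      dS = (fun x y => 2 * (levS (next (lub x y)) : ℝ) - (levS x : ℝ) - (levS y : ℝ)) →
      Set.BijOn next {x : T | IsMin x} {s : T | s ∈ S ∧ ∀ t ∈ S, t ≤ s → t = s} ∧
      (∀ ε : ℝ, ∃ δ : ℝ, ∀ x y : T, IsMin x → IsMin y →
        dT x y ≤ ε → dS (next x) (next y) ≤ δ) ∧
      (∀ ε : ℝ, ∃ δ : ℝ, ∀ x y : T, IsMin x → IsMin y →
        dS (next x) (next y) ≤ ε → dT x y ≤ δ) := by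
  intro dT dS hdT hdS
  -- Every element has a minimal element below it.
  have hmin_le : ∀ a : T, ∃ x : T, IsMin x ∧ x ≤ a := by
    intro a
    obtain ⟨x, hxa, hxmin⟩ := hwf.has_min {t : T | t ≤ a} ⟨a, le_refl a⟩
    refine ⟨x, ?_, hxa⟩
    intro b hb
    rcases eq_or_lt_of_le hb with h | h
    · exact h.ge
    · exact absurd h (hxmin b (le_trans hb hxa))
  -- Minimal elements have level 1.
  have hlevmin : ∀ x : T, IsMin x → lev x = 1 := by
    intro x hx
    have := hlev x x hx le_rfl
    simpa using this.symm
  -- Minimal elements are in S.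
  have hminS : ∀ x : T, IsMin x → x ∈ S := by
    intro x hx
    rw [hS]
    exact ⟨0, by rw [hlevmin x hx, hk0]⟩
  -- next is the identity on minimal elements.
  have hnextmin : ∀ x : T, IsMin x → next x = x := by
    intro x hx
    exact le_antisymm ((hnext x).2.2 x (hminS x hx) le_rfl) (hnext x).2.1
  -- k n ≥ n + 1
  have hkub : ∀ n : ℕ, n + 1 ≤ k n := by
    intro n
    induction n with
    | zero => omega
    | succ m ih => have := hk (show m < m + 1 by omega); omega
  -- levels in S are positive, hence intervals are finite
  have hfin : ∀ x a : T, IsMin x → x ≤ a → (Set.Icc x a).Finite := by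
    intro x a hx hxa
    obtain ⟨n, hn⟩ : next a ∈ {x : T | ∃ n : ℕ, lev x = k n} := hS ▸ (hnext a).1
    have hab : a ≤ next a := (hnext a).2.1
    have hcard : Nat.card (Set.Icc x (next a)) = lev (next a) :=
      hlev (next a) x hx (le_trans hxa hab)
    have hpos : 0 < Nat.card (Set.Icc x (next a)) := by
      rw [hcard, hn]; have := hkub n; omega
    have hfin' : (Set.Icc x (next a)).Finite := by
      by_contra hinf
      have hinf' : (Set.Icc x (next a)).Infinite := hinf
      have : Nat.card (Set.Icc x (next a)) = 0 := by
        have := hinf'.to_subtype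
        exact Nat.card_eq_zero_of_infinite
      omega
    exact hfin'.subset (Set.Icc_subset_Icc_right hab)
  -- level is monotone
  have hle : ∀ a b : T, a ≤ b → lev a ≤ lev b := by
    intro a b hab
    obtain ⟨x, hx, hxa⟩ := hmin_le a
    rw [← hlev a x hx hxa, ← hlev b x hx (le_trans hxa hab),
      Nat.card_coe_set_eq, Nat.card_coe_set_eq]
    exact Set.ncard_le_ncard (Set.Icc_subset_Icc_right hab)
      (hfin x b hx (le_trans hxa hab))
  -- intermediate value property for lev on chains
  have hIV : ∀ a b : T, a ≤ b → ∀ l : ℕ, lev a ≤ l → l ≤ lev b →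
      ∃ c : T, a ≤ c ∧ c ≤ b ∧ lev c = l := by
    intro a b hab l hal hlb
    obtain ⟨x, hx, hxa⟩ := hmin_le a
    induction l with
    | zero =>
      exact ⟨a, le_rfl, hab, Nat.le_zero.mp hal⟩
    | succ m ih =>
      rcases Nat.lt_or_ge (lev a) (m + 1) with hlt | hge
      · -- lev a ≤ m, so get c at level m, then step up
        obtain ⟨c, hac, hcb, hc⟩ := ih (by omega) (by omega)
        have hcb' : c < b := by
          rcases eq_or_lt_of_le hcb with h | h
          · exfalso; rw [h] at hc; omega
          · exact h
        obtain ⟨c', hc'mem, hc'min⟩ :=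
          hwf.has_min {t : T | c < t ∧ t ≤ b} ⟨b, hcb', le_rfl⟩
        obtain ⟨hcc', hc'b⟩ := hc'mem
        -- c' is the least element strictly above c and ≤ b
        have hmin' : ∀ t : T, c < t → t ≤ b → c' ≤ t := by
          intro t hct htb
          have hcomp := hchain c (Set.mem_setOf.mpr hcc'.le) (Set.mem_setOf.mpr hct.le)
          rcases eq_or_ne c' t with h | h
          · exact h.le
          · rcases hcomp h with h' | h'
            · exact h'
            · exact absurd (lt_of_le_of_ne h' h.symm) (hc'min t ⟨hct, htb⟩)
        have hxc : x ≤ c := le_trans hxa hac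
        have hxc' : x ≤ c' := le_trans hxc hcc'.le
        have hicc : Set.Icc x c' = insert c' (Set.Icc x c) := by
          ext t
          simp only [Set.mem_Icc, Set.mem_insert_iff]
          constructor
          · rintro ⟨hxt, htc'⟩
            rcases eq_or_ne t c' with h | h
            · exact Or.inl h
            · refine Or.inr ⟨hxt, ?_⟩
              have hcomp := hchain x (Set.mem_setOf.mpr hxt) (Set.mem_setOf.mpr hxc)
              rcases eq_or_ne t c with h' | h'
              · exact h'.le
              · rcases hcomp h' with h'' | h''
                · exact h''
                · have hct : c < t := lt_of_le_of_ne h'' h'.symm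
                  exact absurd (le_antisymm htc' (hmin' t hct (le_trans htc' hc'b))) h
          · rintro (h | ⟨hxt, htc⟩)
            · exact ⟨h ▸ hxc', h ▸ le_rfl⟩
            · exact ⟨hxt, le_trans htc hcc'.le⟩
        have hnotmem : c' ∉ Set.Icc x c := by
          intro h
          exact absurd (lt_of_lt_of_le hcc' h.2) (lt_irrefl c)
        have hlevc' : lev c' = m + 1 := by
          rw [← hlev c' x hx hxc', hicc, Nat.card_coe_set_eq,
            Set.ncard_insert_of_notMem hnotmem (hfin x c hx hxc),
            ← Nat.card_coe_set_eq, hlev c x hx hxc, hc]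
        exact ⟨c', le_trans hac hcc'.le, hc'b, hlevc'⟩
      · -- lev a = m + 1
        exact ⟨a, le_rfl, hab, le_antisymm hal hge⟩
  -- key bound: the S-level index of next a is at most lev a
  have hkey : ∀ a : T, ∀ n : ℕ, lev (next a) = k n → n ≤ lev a := by
    intro a n hn
    cases n with
    | zero => exact Nat.zero_le _
    | succ m =>
      by_contra h
      have hge : m + 1 > lev a := by omega
      have h1 : lev a ≤ k m := by have := hkub m; omega
      have h2 : k m ≤ lev (next a) := by
        rw [hn]; exact (hk (Nat.lt_succ_self m)).le
      obtain ⟨c, hac, hcn, hc⟩ := hIV a (next a) (hnext a).2.1 (k m) h1 h2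
      have hcS : c ∈ S := hS ▸ ⟨m, hc⟩
      have := (hnext a).2.2 c hcS hac
      have hceq : c = next a := le_antisymm hcn this
      rw [hceq, hn] at hc
      exact absurd hc (hk (Nat.lt_succ_self m)).ne'
  -- levS of a minimal element is 1
  have hlevSmin : ∀ x : T, IsMin x → levS x = 1 := by
    intro x hx
    have := hlevS x 0 (by rw [hlevmin x hx, hk0])
    omega
  -- compute dS on minimal elements
  have hdSval : ∀ x y : T, IsMin x → IsMin y → ∀ n : ℕ,
      lev (next (lub x y)) = k n → dS (next x) (next y) = 2 * n := by
    intro x y hx hy n hn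
    rw [hdS, hnextmin x hx, hnextmin y hy]
    simp only
    rw [hlevS (next (lub x y)) n hn, hlevSmin x hx, hlevSmin y hy]
    push_cast
    ring
  have hdTval : ∀ x y : T, IsMin x → IsMin y →
      dT x y = 2 * (lev (lub x y) : ℝ) - 2 := by
    intro x y hx hy
    rw [hdT]
    simp only
    rw [hlevmin x hx, hlevmin y hy]
    push_cast
    ring
  refine ⟨?_, ?_, ?_⟩
  · -- bijection
    refine ⟨?_, ?_, ?_⟩
    · intro x hx
      rw [hnextmin x hx]
      refine ⟨hminS x hx, fun t _ ht => le_antisymm ht (hx ht)⟩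
    · intro x hx y hy h
      rwa [hnextmin x hx, hnextmin y hy] at h
    · rintro s ⟨hsS, hsmin⟩
      obtain ⟨x, hx, hxs⟩ := hmin_le s
      have : x = s := hsmin x (hminS x hx) hxs
      exact ⟨x, hx, by rw [hnextmin x hx, this]⟩
  · -- forward bornologous: δ = ε + 2
    intro ε
    refine ⟨ε + 2, fun x y hx hy h => ?_⟩
    obtain ⟨n, hn⟩ : next (lub x y) ∈ {x : T | ∃ n : ℕ, lev x = k n} :=
      hS ▸ (hnext (lub x y)).1
    rw [hdSval x y hx hy n hn]
    rw [hdTval x y hx hy] at h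
    have hnle : n ≤ lev (lub x y) := hkey (lub x y) n hn
    have : (n : ℝ) ≤ (lev (lub x y) : ℝ) := by exact_mod_cast hnle
    linarith
  · -- backward bornologous: δ = 2 * k ⌈ε⌉₊
    intro ε
    refine ⟨2 * (k ⌈ε⌉₊ : ℝ), fun x y hx hy h => ?_⟩
    obtain ⟨n, hn⟩ : next (lub x y) ∈ {x : T | ∃ n : ℕ, lev x = k n} :=
      hS ▸ (hnext (lub x y)).1
    rw [hdSval x y hx hy n hn] at h
    rw [hdTval x y hx hy]
    have h1 : (n : ℝ) ≤ ε := by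
      have : (0 : ℝ) ≤ (n : ℝ) := Nat.cast_nonneg n
      linarith
    have h2 : n ≤ ⌈ε⌉₊ := by
      have := Nat.le_ceil ε
      exact_mod_cast le_trans h1 this
    have h3 : lev (lub x y) ≤ k ⌈ε⌉₊ := by
      calc lev (lub x y) ≤ lev (next (lub x y)) := hle _ _ (hnext (lub x y)).2.1
        _ = k n := hn
        _ ≤ k ⌈ε⌉₊ := hk.monotone h2
    have : (lev (lub x y) : ℝ) ≤ (k ⌈ε⌉₊ : ℝ) := by exact_mod_cast h3
    linarith
end

section
/- A level-preserving monotone injection φ : T₁ → T₂ between towers restricts to an isometric embedding of the base [T₁] into the base [T₂] with respect to the path metrics. -/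
private lemma exists_isMin_le {T : Type*} [PartialOrder T]
    (hwf : WellFounded ((· < ·) : T → T → Prop)) (z : T) :
    ∃ w, IsMin w ∧ w ≤ z := by
  obtain ⟨w, hw, hmin⟩ := hwf.has_min {w | w ≤ z} ⟨z, le_refl z⟩
  refine ⟨w, fun u hu => ?_, hw⟩
  by_contra h
  exact hmin u (le_trans hu hw) (lt_of_le_of_ne hu (fun he => h (he ▸ le_rfl)))

/-- A level-preserving monotone injection between towers restricts to an isometric
embedding of the bases with respect to the path metrics. -/
theorem stmt12 {T₁ T₂ : Type*} [PartialOrder T₁] [PartialOrder T₂]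
    (lev₁ : T₁ → ℕ) (lub₁ : T₁ → T₁ → T₁)
    (hwf₁ : WellFounded ((· < ·) : T₁ → T₁ → Prop))
    (hlub₁ : ∀ x y : T₁, IsLUB {x, y} (lub₁ x y))
    (hchain₁ : ∀ x : T₁, IsChain (· ≤ ·) {y : T₁ | x ≤ y})
    (hlev₁ : ∀ a x : T₁, IsMin x → x ≤ a → Nat.card (Set.Icc x a) = lev₁ a)
    (lev₂ : T₂ → ℕ) (lub₂ : T₂ → T₂ → T₂)
    (hwf₂ : WellFounded ((· < ·) : T₂ → T₂ → Prop))
    (hlub₂ : ∀ x y : T₂, IsLUB {x, y} (lub₂ x y))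
    (hchain₂ : ∀ x : T₂, IsChain (· ≤ ·) {y : T₂ | x ≤ y})
    (hlev₂ : ∀ a x : T₂, IsMin x → x ≤ a → Nat.card (Set.Icc x a) = lev₂ a)
    (φ : T₁ → T₂) (hinj : Function.Injective φ) (hmono : Monotone φ)
    (hlevp : ∀ x : T₁, lev₂ (φ x) = lev₁ x) :
    ∀ x y : T₁, IsMin x → IsMin y →
      2 * (lev₂ (lub₂ (φ x) (φ y)) : ℝ) - (lev₂ (φ x) : ℝ) - (lev₂ (φ y) : ℝ) =
        2 * (lev₁ (lub₁ x y) : ℝ) - (lev₁ x : ℝ) - (lev₁ y : ℝ) := by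
  -- ncard versions of the level hypotheses
  have hc₁ : ∀ a z : T₁, IsMin z → z ≤ a → (Set.Icc z a).ncard = lev₁ a := by
    intro a z hz h; rw [← Nat.card_coe_set_eq, hlev₁ a z hz h]
  have hc₂ : ∀ a z : T₂, IsMin z → z ≤ a → (Set.Icc z a).ncard = lev₂ a := by
    intro a z hz h; rw [← Nat.card_coe_set_eq, hlev₂ a z hz h]
  -- φ maps minimal elements to minimal elements
  have hminφ : ∀ z : T₁, IsMin z → IsMin (φ z) := by
    intro z hz
    have hlz : lev₂ (φ z) = 1 := by
      rw [hlevp, ← hc₁ z z hz le_rfl, Set.Icc_self, Set.ncard_singleton]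
    intro u hu
    obtain ⟨w, hwmin, hwu⟩ := exists_isMin_le hwf₂ u
    have h1 : (Set.Icc w (φ z)).ncard = 1 := by
      rw [hc₂ (φ z) w hwmin (hwu.trans hu), hlz]
    obtain ⟨a, ha⟩ := Set.ncard_eq_one.mp h1
    have hw : w ∈ Set.Icc w (φ z) := ⟨le_rfl, hwu.trans hu⟩
    have hz' : φ z ∈ Set.Icc w (φ z) := ⟨hwu.trans hu, le_rfl⟩
    rw [ha] at hw hz'
    have : φ z = w := by rw [Set.mem_singleton_iff.mp hw, ← Set.mem_singleton_iff.mp hz']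
    exact this.le.trans hwu
  -- cardinalities of intervals from minimal elements are preserved
  have hcard : ∀ (z a : T₁), IsMin z → z ≤ a →
      (Set.Icc (φ z) (φ a)).ncard = (Set.Icc z a).ncard := by
    intro z a hz hza
    rw [hc₂ (φ a) (φ z) (hminφ z hz) (hmono hza), hlevp, hc₁ a z hz hza]
  -- the image of a finite interval from a minimal element is the full interval
  have himg : ∀ (z a : T₁), IsMin z → z ≤ a → (Set.Icc z a).Finite →
      φ '' Set.Icc z a = Set.Icc (φ z) (φ a) := by
    intro z a hz hza hfin
    have hsub : φ '' Set.Icc z a ⊆ Set.Icc (φ z) (φ a) := by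
      rintro _ ⟨u, ⟨h1, h2⟩, rfl⟩; exact ⟨hmono h1, hmono h2⟩
    have hpos : 0 < (Set.Icc (φ z) (φ a)).ncard := by
      rw [hcard z a hz hza]
      exact (Set.ncard_pos hfin).mpr ⟨z, le_rfl, hza⟩
    have hfin2 : (Set.Icc (φ z) (φ a)).Finite :=
      Set.finite_of_ncard_ne_zero hpos.ne'
    refine Set.eq_of_subset_of_ncard_le hsub ?_ hfin2
    rw [Set.ncard_image_of_injective _ hinj, hcard z a hz hza]
  -- extraction: preimages of points in finite intervals
  have hpoint : ∀ (z a : T₁), IsMin z → z ≤ a → (Set.Icc z a).Finite →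
      ∀ w, φ z ≤ w → w ≤ φ a → ∃ u, z ≤ u ∧ u ≤ a ∧ φ u = w := by
    intro z a hz hza hfin w h1 h2
    have : w ∈ φ '' Set.Icc z a := (himg z a hz hza hfin) ▸ (⟨h1, h2⟩ : w ∈ Set.Icc (φ z) (φ a))
    obtain ⟨u, hu, hφu⟩ := this
    exact ⟨u, hu.1, hu.2, hφu⟩
  intro x y hx hy
  set s := lub₁ x y with hs
  set s₂ := lub₂ (φ x) (φ y) with hs₂
  have hxs : x ≤ s := (hlub₁ x y).1 (by simp)
  have hys : y ≤ s := (hlub₁ x y).1 (by simp)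
  have hxs₂ : φ x ≤ s₂ := (hlub₂ (φ x) (φ y)).1 (by simp)
  have hys₂ : φ y ≤ s₂ := (hlub₂ (φ x) (φ y)).1 (by simp)
  have hs₂s : s₂ ≤ φ s := by
    refine (hlub₂ (φ x) (φ y)).2 ?_
    rintro w hw
    rcases hw with rfl | hw
    · exact hmono hxs
    · rw [Set.mem_singleton_iff.mp hw]; exact hmono hys
  -- main claim
  suffices h : lev₂ s₂ = lev₁ s by
    rw [hlevp x, hlevp y, h]
  -- existence of high finite-level elements below s above a minimal z, in infinite case
  have hexists : ∀ z : T₁, IsMin z → z ≤ s → (Set.Icc z s).Infinite → ∀ m : ℕ,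
      ∃ e, z ≤ e ∧ e ≤ s ∧ (Set.Icc z e).Finite ∧ m < (Set.Icc z e).ncard := by
    intro z hz hzs hinf m
    set B : Set T₁ := {e | z ≤ e ∧ e ≤ s ∧ (Set.Icc z e).Finite} with hB
    have hBinf : B.Infinite := by
      by_contra hBfin
      rw [Set.not_infinite] at hBfin
      have hC : (Set.Icc z s \ B).Infinite := hinf.diff hBfin
      obtain ⟨c, hc, hcmin⟩ := hwf₁.has_min (Set.Icc z s \ B) hC.nonempty
      have hcfin : (Set.Icc z c).Finite := by
        have hsub : Set.Icc z c ⊆ insert c B := by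
          rintro e ⟨he1, he2⟩
          rcases eq_or_lt_of_le he2 with rfl | hlt
          · exact Set.mem_insert _ _
          · refine Set.mem_insert_of_mem _ ?_
            by_contra heB
            exact hcmin e ⟨⟨he1, he2.trans hc.1.2⟩, heB⟩ hlt
        exact (hBfin.insert c).subset hsub
      exact hc.2 ⟨hc.1.1, hc.1.2, hcfin⟩
    by_contra hcon
    push_neg at hcon
    have hinjOn : Set.InjOn (fun e => (Set.Icc z e).ncard) B := by
      intro e he e' he' heq
      by_contra hne
      have hcmp := hchain₁ z he.1 he'.1 hne
      rcases hcmp with hle | hle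
      · have hss : Set.Icc z e ⊂ Set.Icc z e' := by
          refine ⟨Set.Icc_subset_Icc_right hle, fun habs => ?_⟩
          exact hne (le_antisymm hle ((habs ⟨he'.1, le_rfl⟩).2))
        exact absurd heq (Set.ncard_lt_ncard hss he'.2.2).ne
      · have hss : Set.Icc z e' ⊂ Set.Icc z e := by
          refine ⟨Set.Icc_subset_Icc_right hle, fun habs => ?_⟩
          exact hne (le_antisymm ((habs ⟨he.1, le_rfl⟩).2) hle)
        exact absurd heq.symm (Set.ncard_lt_ncard hss he.2.2).ne
    have himgfin : ((fun e => (Set.Icc z e).ncard) '' B).Finite := by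
      refine (Set.finite_Iic m).subset ?_
      rintro _ ⟨e, heB, rfl⟩
      exact hcon e heB.1 heB.2.1 heB.2.2
    exact hBinf (Set.Finite.of_finite_image himgfin hinjOn)
  rcases (Set.Icc x s).finite_or_infinite with hfin | hinf
  · -- finite case: s₂ = φ s
    obtain ⟨u, hxu, hus, hφu⟩ := hpoint x s hx hxs hfin s₂ hxs₂ hs₂s
    have hyfin : (Set.Icc y s).Finite := by
      have hpos : 0 < (Set.Icc y s).ncard := by
        rw [hc₁ s y hy hys, ← hc₁ s x hx hxs]
        exact (Set.ncard_pos hfin).mpr ⟨x, le_rfl, hxs⟩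
      exact Set.finite_of_ncard_ne_zero hpos.ne'
    obtain ⟨v, hyv, hvs, hφv⟩ := hpoint y s hy hys hyfin s₂ hys₂ hs₂s
    have huv : u = v := hinj (hφu.trans hφv.symm)
    have hsu : s ≤ u := by
      refine (hlub₁ x y).2 ?_
      rintro w hw
      rcases hw with rfl | hw
      · exact hxu
      · rw [Set.mem_singleton_iff.mp hw, huv]; exact hyv
    have : u = s := le_antisymm hus hsu
    rw [← hφu, this, hlevp]
  · -- infinite case: lev₁ s = 0 and lev₂ s₂ = 0
    have hlevs : lev₁ s = 0 := by rw [← hc₁ s x hx hxs, hinf.ncard]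
    have hyinf : (Set.Icc y s).Infinite := by
      by_contra hyfin
      rw [Set.not_infinite] at hyfin
      have := hc₁ s y hy hys
      rw [hlevs] at this
      exact ((Set.ncard_pos hyfin).mpr ⟨y, le_rfl, hys⟩).ne' this
    rw [hlevs]
    by_contra hne
    set m := lev₂ s₂ with hm
    have hmcard : (Set.Icc (φ x) s₂).ncard = m := hc₂ s₂ (φ x) (hminφ x hx) hxs₂
    have hfin₂ : (Set.Icc (φ x) s₂).Finite :=
      Set.finite_of_ncard_ne_zero (hmcard ▸ hne)
    obtain ⟨e, hxe, hes, hfe, hce⟩ := hexists x hx hxs hinf m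
    obtain ⟨f, hyf, hfs, hff, hcf⟩ := hexists y hy hys hyinf m
    have hs₂e : s₂ ≤ φ e := by
      have hcmp : φ e ≤ s₂ ∨ s₂ ≤ φ e := by
        rcases eq_or_ne (φ e) s₂ with h | h
        · exact Or.inl h.le
        · exact hchain₂ (φ x) (hmono hxe) hxs₂ h
      rcases hcmp with h | h
      · exfalso
        have hsub : Set.Icc (φ x) (φ e) ⊆ Set.Icc (φ x) s₂ := Set.Icc_subset_Icc_right h
        have hle := Set.ncard_le_ncard hsub hfin₂
        rw [hcard x e hx hxe, hmcard] at hle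
        omega
      · exact h
    have hs₂f : s₂ ≤ φ f := by
      have hcmp : φ f ≤ s₂ ∨ s₂ ≤ φ f := by
        rcases eq_or_ne (φ f) s₂ with h | h
        · exact Or.inl h.le
        · exact hchain₂ (φ y) (hmono hyf) hys₂ h
      rcases hcmp with h | h
      · exfalso
        have hyfin₂ : (Set.Icc (φ y) s₂).Finite := by
          have : (Set.Icc (φ y) s₂).ncard = m := hc₂ s₂ (φ y) (hminφ y hy) hys₂
          exact Set.finite_of_ncard_ne_zero (this ▸ hne)
        have hsub : Set.Icc (φ y) (φ f) ⊆ Set.Icc (φ y) s₂ := Set.Icc_subset_Icc_right h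
        have hle := Set.ncard_le_ncard hsub hyfin₂
        rw [hcard y f hy hyf, hc₂ s₂ (φ y) (hminφ y hy) hys₂] at hle
        omega
      · exact h
    obtain ⟨u, hxu, hue, hφu⟩ := hpoint x e hx hxe hfe s₂ hxs₂ hs₂e
    obtain ⟨v, hyv, hvf, hφv⟩ := hpoint y f hy hyf hff s₂ hys₂ hs₂f
    have huv : u = v := hinj (hφu.trans hφv.symm)
    have hsu : s ≤ u := by
      refine (hlub₁ x y).2 ?_
      rintro w hw
      rcases hw with rfl | hw
      · exact hxu
      · rw [Set.mem_singleton_iff.mp hw, huv]; exact hyv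
    have hes' : e = s := le_antisymm hes (hsu.trans hue)
    rw [hes'] at hfe
    exact hinf hfe
end

section
/- If G is a group that is the union of an increasing sequence of subgroups H₁ ⊆ H₂ ⊆ ⋯ with H₀ trivial, then the set T = {gH_n : g ∈ G, n ∈ ℕ} of cosets, ordered by inclusion, is a homogeneous tower in which every element of level n+1 has exactly [H_{n+1} : H_n] parents. -/
section Aux
variable {G : Type*} [Group G] (H : ℕ → Subgroup G)

abbrev auxR (a b : Σ n : ℕ, G ⧸ H n) : Prop :=
  a.1 ≤ b.1 ∧ ∃ g : G, a.2 = QuotientGroup.mk g ∧ b.2 = QuotientGroup.mk g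

variable {H}

lemma aux_mk_mono (hmono : Monotone H) {m n : ℕ} (hmn : m ≤ n) {g g' : G}
    (hg : (QuotientGroup.mk g : G ⧸ H m) = QuotientGroup.mk g') :
    (QuotientGroup.mk g : G ⧸ H n) = QuotientGroup.mk g' := by
  rw [QuotientGroup.eq] at hg ⊢
  exact hmono hmn hg

lemma aux_eq_of_fst_eq {a b : Σ n : ℕ, G ⧸ H n} (hfst : a.1 = b.1) (hab : auxR H a b) :
    a = b := by
  obtain ⟨m, qa⟩ := a
  obtain ⟨n, qb⟩ := b
  obtain ⟨-, g, h1, h2⟩ := hab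
  cases hfst
  simp_all

lemma aux_trans (hmono : Monotone H) {a b c : Σ n : ℕ, G ⧸ H n}
    (hab : auxR H a b) (hbc : auxR H b c) : auxR H a c := by
  obtain ⟨h1, g, h2, h3⟩ := hab
  obtain ⟨h4, g', h5, h6⟩ := hbc
  refine ⟨h1.trans h4, g, h2, ?_⟩
  rw [h6]
  exact (aux_mk_mono hmono h4 (h3.symm.trans h5)).symm

end Aux

lemma aux_fiber_card {G : Type*} [Group G] (K L : Subgroup G) (g₀ : G) :
    Nat.card {y : G ⧸ K // ∃ g : G, y = QuotientGroup.mk g ∧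
      (QuotientGroup.mk g : G ⧸ L) = QuotientGroup.mk g₀} = K.relIndex L := by
  rw [Subgroup.relIndex, Subgroup.index]
  refine Nat.card_congr (Equiv.ofBijective ?_ ⟨?_, ?_⟩).symm
  · refine Quotient.lift (fun l : L => (⟨QuotientGroup.mk (g₀ * l), g₀ * l, rfl, ?_⟩ :
      {y : G ⧸ K // ∃ g : G, y = QuotientGroup.mk g ∧
        (QuotientGroup.mk g : G ⧸ L) = QuotientGroup.mk g₀})) ?_
    · rw [QuotientGroup.eq]
      simpa using L.inv_mem l.2
    · intro l l' hll
      have h1 : l⁻¹ * l' ∈ K.subgroupOf L := (QuotientGroup.leftRel_apply).mp hll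
      rw [Subgroup.mem_subgroupOf] at h1
      exact Subtype.ext (by rw [QuotientGroup.eq]; simpa [mul_assoc] using h1)
  · intro u v huv
    induction u using Quotient.inductionOn
    induction v using Quotient.inductionOn
    rename_i l l'
    simp only [Quotient.lift_mk, Subtype.mk.injEq, QuotientGroup.eq] at huv
    exact Quotient.sound (QuotientGroup.leftRel_apply.mpr
      (by rw [Subgroup.mem_subgroupOf]; simpa [mul_inv_rev, mul_assoc] using huv))
  · rintro ⟨y, g, rfl, hg⟩
    have hg' : g₀⁻¹ * g ∈ L := by rw [QuotientGroup.eq] at hg; simpa using L.inv_mem hg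
    refine ⟨Quotient.mk _ ⟨g₀⁻¹ * g, hg'⟩, Subtype.ext ?_⟩
    simp

/-- parent count as standalone lemma -/
lemma aux_parents {G : Type*} [Group G] {H : ℕ → Subgroup G} (hmono : Monotone H)
    (n : ℕ) (q : G ⧸ H (n + 1)) :
    Nat.card {w : Σ n : ℕ, G ⧸ H n // auxR H w ⟨n+1, q⟩ ∧ w ≠ ⟨n+1, q⟩ ∧ w.1 = n} =
      (H n).relIndex (H (n + 1)) := by
  obtain ⟨g₀, hg₀⟩ := QuotientGroup.mk_surjective q
  rw [← aux_fiber_card (H n) (H (n+1)) g₀]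
  refine Nat.card_congr (Equiv.ofBijective ?_ ⟨?_, ?_⟩).symm
  · refine fun y => ⟨⟨n, y.1⟩, ⟨Nat.le_succ n, ?_⟩, ?_, rfl⟩
    · obtain ⟨g, hy, hg⟩ := y.2
      exact ⟨g, hy, by rw [← hg₀, hg]⟩
    · intro hcon
      exact Nat.succ_ne_self n (congrArg Sigma.fst hcon.symm)
  · intro y y' hyy
    have h1 : (⟨n, y.1⟩ : Σ n : ℕ, G ⧸ H n) = ⟨n, y'.1⟩ := congrArg Subtype.val hyy
    injection h1 with h2 h3
    exact Subtype.ext h3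
  · rintro ⟨⟨k, z⟩, ⟨-, g, hz, hq⟩, -, hk⟩
    cases hk
    refine ⟨⟨z, g, hz, ?_⟩, Subtype.ext rfl⟩
    rw [← hq, hg₀]



/-- If a group `G` is the union of an increasing sequence of subgroups `H n` with
`H 0` trivial, then the set of cosets `{gH_n : g ∈ G, n ∈ ℕ}` (a coset of `H n`
being recorded together with its index `n`, i.e. as an element of `Σ n, G ⧸ H n`),
ordered by inclusion, is a homogeneous tower (with `lev (gH_n) = n + 1`) in which
every coset of `H (n+1)` has exactly `[H (n+1) : H n]` parents. -/
theorem stmt15 {G : Type*} [Group G] (H : ℕ → Subgroup G)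
    (h0 : H 0 = ⊥) (hmono : Monotone H) (hunion : ∀ g : G, ∃ n : ℕ, g ∈ H n) :
    ∀ le : (Σ n : ℕ, G ⧸ H n) → (Σ n : ℕ, G ⧸ H n) → Prop,
      le = (fun a b => a.1 ≤ b.1 ∧
        ∃ g : G, a.2 = QuotientGroup.mk g ∧ b.2 = QuotientGroup.mk g) →
      -- `le` (inclusion of cosets) is a partial order:
      IsPartialOrder (Σ n : ℕ, G ⧸ H n) le ∧
      -- well-foundedness:
      WellFounded (fun a b : Σ n : ℕ, G ⧸ H n => le a b ∧ a ≠ b) ∧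
      -- any two elements have a least upper bound:
      (∀ a b : Σ n : ℕ, G ⧸ H n, ∃ s, le a s ∧ le b s ∧
        ∀ t, le a t → le b t → le s t) ∧
      -- upper cones are linearly ordered:
      (∀ a b c : Σ n : ℕ, G ⧸ H n, le a b → le a c → le b c ∨ le c b) ∧
      -- the level of a coset of `H n` is `n + 1`:
      (∀ a x : Σ n : ℕ, G ⧸ H n, le x a → (∀ w, le w x → w = x) →
        Nat.card {w : Σ n : ℕ, G ⧸ H n // le x w ∧ le w a} = a.1 + 1) ∧
      -- every coset of `H (n+1)` has exactly `[H (n+1) : H n]` parents: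
      (∀ (n : ℕ) (x : Σ n : ℕ, G ⧸ H n), x.1 = n + 1 →
        Nat.card {w : Σ n : ℕ, G ⧸ H n // le w x ∧ w ≠ x ∧ w.1 = n} =
          (H n).relIndex (H (n + 1))) ∧
      -- homogeneity: elements of the same level have equally many parents:
      (∀ x y : Σ n : ℕ, G ⧸ H n, x.1 = y.1 →
        Nat.card {w : Σ n : ℕ, G ⧸ H n // le w x ∧ w ≠ x ∧ w.1 + 1 = x.1} =
          Nat.card {w : Σ n : ℕ, G ⧸ H n // le w y ∧ w ≠ y ∧ w.1 + 1 = y.1}) := by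
  classical
  intro le hle
  subst hle
  -- the relation is `auxR H`
  have hparents : ∀ (n : ℕ) (x : Σ n : ℕ, G ⧸ H n), x.1 = n + 1 →
      Nat.card {w : Σ n : ℕ, G ⧸ H n // auxR H w x ∧ w ≠ x ∧ w.1 = n} =
        (H n).relIndex (H (n + 1)) := by
    rintro n ⟨m, q⟩ hm
    cases hm
    exact aux_parents hmono n q
  refine ⟨?_, ?_, ?_, ?_, ?_, hparents, ?_⟩
  · -- partial order
    refine { refl := ?_, trans := fun a b c => aux_trans hmono,
             antisymm := ?_ }
    · intro a
      obtain ⟨g, hg⟩ := QuotientGroup.mk_surjective a.2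
      exact ⟨le_refl _, g, hg.symm, hg.symm⟩
    · intro a b h1 h2
      exact aux_eq_of_fst_eq (le_antisymm h1.1 h2.1) h1
  · -- well-founded
    refine Subrelation.wf (r := InvImage (· < ·) Sigma.fst) ?_ (InvImage.wf _ wellFounded_lt)
    rintro a b ⟨hab, hne⟩
    exact lt_of_le_of_ne hab.1 (fun h => hne (aux_eq_of_fst_eq h hab))
  · -- least upper bounds
    intro a b
    obtain ⟨g, hg⟩ := QuotientGroup.mk_surjective a.2
    obtain ⟨g', hg'⟩ := QuotientGroup.mk_surjective b.2
    have hex : ∃ N : ℕ, a.1 ≤ N ∧ b.1 ≤ N ∧ g⁻¹ * g' ∈ H N := by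
      obtain ⟨k, hk⟩ := hunion (g⁻¹ * g')
      exact ⟨max (max a.1 b.1) k, le_max_of_le_left (le_max_left _ _),
        le_max_of_le_left (le_max_right _ _), hmono (le_max_right _ _) hk⟩
    set N := Nat.find hex with hN
    obtain ⟨hNa, hNb, hNg⟩ := Nat.find_spec hex
    refine ⟨⟨N, QuotientGroup.mk g⟩, ⟨hNa, g, hg.symm, rfl⟩,
      ⟨hNb, g', hg'.symm, QuotientGroup.eq.mpr hNg⟩, ?_⟩
    rintro t ⟨hat, h, h1, h2⟩ ⟨hbt, h', h3, h4⟩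
    have e1 : g⁻¹ * h ∈ H a.1 := QuotientGroup.eq.mp (hg.trans h1)
    have e2 : h⁻¹ * h' ∈ H t.1 := QuotientGroup.eq.mp (h2.symm.trans h4)
    have e3 : h'⁻¹ * g' ∈ H b.1 := QuotientGroup.eq.mp (h3.symm.trans hg'.symm)
    have hPt : a.1 ≤ t.1 ∧ b.1 ≤ t.1 ∧ g⁻¹ * g' ∈ H t.1 := by
      refine ⟨hat, hbt, ?_⟩
      have heq : (g⁻¹ * h) * (h⁻¹ * h') * (h'⁻¹ * g') = g⁻¹ * g' := by group
      rw [← heq]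
      exact (H t.1).mul_mem ((H t.1).mul_mem (hmono hat e1) e2) (hmono hbt e3)
    refine ⟨Nat.find_min' hex hPt, h, ?_, h2⟩
    show (QuotientGroup.mk g : G ⧸ H N) = QuotientGroup.mk h
    exact aux_mk_mono hmono hNa (hg.trans h1)
  · -- upper cones linearly ordered
    rintro a b c ⟨hab, g, h1, h2⟩ ⟨hac, g', h3, h4⟩
    have hgg : (QuotientGroup.mk g : G ⧸ H a.1) = QuotientGroup.mk g' := h1.symm.trans h3
    rcases le_total b.1 c.1 with hbc | hcb
    · refine Or.inl ⟨hbc, g, h2, ?_⟩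
      rw [h4]
      exact (aux_mk_mono hmono (hab.trans hbc) hgg).symm
    · refine Or.inr ⟨hcb, g', h4, ?_⟩
      rw [h2]
      exact aux_mk_mono hmono (hac.trans hcb) hgg
  · -- levels
    intro a x hxa hmin
    obtain ⟨g₀, hg₀⟩ := QuotientGroup.mk_surjective x.2
    have hx : x = ⟨0, QuotientGroup.mk g₀⟩ :=
      (hmin ⟨0, QuotientGroup.mk g₀⟩ ⟨Nat.zero_le _, g₀, rfl, hg₀.symm⟩).symm
    subst hx
    have hbot : ∀ {u u' : G}, (QuotientGroup.mk u : G ⧸ H 0) = QuotientGroup.mk u' → u = u' := by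
      intro u u' huu
      have h1 := QuotientGroup.eq.mp huu
      rwa [h0, Subgroup.mem_bot, inv_mul_eq_one] at h1
    obtain ⟨m, qa⟩ := a
    have hqa : qa = QuotientGroup.mk g₀ := by
      obtain ⟨-, g, hgg₀, hqa⟩ := hxa
      exact hqa.trans (congrArg QuotientGroup.mk (hbot hgg₀).symm)
    have key : ∀ w : Σ n : ℕ, G ⧸ H n,
        (auxR H ⟨0, QuotientGroup.mk g₀⟩ w ∧ auxR H w ⟨m, qa⟩) ↔
        (w.1 ≤ m ∧ w = ⟨w.1, QuotientGroup.mk g₀⟩) := by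
      rintro ⟨k, z⟩
      constructor
      · rintro ⟨⟨-, g', hg', hz⟩, ⟨hkm, -⟩⟩
        cases hbot hg'
        exact ⟨hkm, congrArg (Sigma.mk k) hz⟩
      · rintro ⟨hkm, hw⟩
        have hz : z = QuotientGroup.mk g₀ := by injection hw
        exact ⟨⟨Nat.zero_le _, g₀, rfl, hz⟩, hkm, g₀, hz, hqa⟩
    have main : Nat.card {w : Σ n : ℕ, G ⧸ H n //
        auxR H ⟨0, QuotientGroup.mk g₀⟩ w ∧ auxR H w ⟨m, qa⟩} = m + 1 := by
      rw [Nat.card_congr (Equiv.ofBijective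
        (fun k : Fin (m+1) => (⟨⟨k, QuotientGroup.mk g₀⟩,
          (key _).mpr ⟨Nat.lt_succ_iff.mp k.2, rfl⟩⟩ :
          {w : Σ n : ℕ, G ⧸ H n // auxR H ⟨0, QuotientGroup.mk g₀⟩ w ∧ auxR H w ⟨m, qa⟩}))
        ⟨?_, ?_⟩).symm, Nat.card_eq_fintype_card, Fintype.card_fin]
      · intro k k' hkk
        have h1 := congrArg Subtype.val hkk
        injection h1 with h2 h3
        exact Fin.ext h2
      · rintro ⟨w, hw⟩
        obtain ⟨hkm, hw2⟩ := (key w).mp hw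
        exact ⟨⟨w.1, Nat.lt_succ_iff.mpr hkm⟩, Subtype.ext hw2.symm⟩
    exact main
  · -- homogeneity
    intro x y hxy
    rcases Nat.eq_zero_or_eq_succ_pred x.1 with h | h
    · have ex : ∀ (z : Σ n : ℕ, G ⧸ H n), z.1 = 0 →
          IsEmpty {w : Σ n : ℕ, G ⧸ H n // auxR H w z ∧ w ≠ z ∧ w.1 + 1 = z.1} := by
        intro z hz
        refine ⟨fun w => ?_⟩
        have := w.2.2.2
        omega
      exact (@Nat.card_of_isEmpty _ (ex x h)).trans
        (@Nat.card_of_isEmpty _ (ex y (hxy ▸ h))).symm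
    · set n := x.1 - 1
      have hx1 : x.1 = n + 1 := h
      have hy1 : y.1 = n + 1 := hxy ▸ h
      have conv : ∀ (z : Σ n : ℕ, G ⧸ H n), z.1 = n + 1 →
          Nat.card {w : Σ n : ℕ, G ⧸ H n // auxR H w z ∧ w ≠ z ∧ w.1 + 1 = z.1} =
          (H n).relIndex (H (n+1)) := by
        intro z hz
        rw [← hparents n z hz]
        refine Nat.card_congr (Equiv.subtypeEquivRight ?_)
        intro w
        rw [hz]
        constructor <;> rintro ⟨h1, h2, h3⟩ <;> exact ⟨h1, h2, by omega⟩
      exact (conv x hx1).trans (conv y hy1).symm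
end

section
/- Let X be an ultra-metric space and (r_n)_{n∈ℕ} an unbounded strictly increasing sequence of nonnegative reals. Then the set T_X = {(B_{r_n}(x), n) : x ∈ X, n ∈ ℕ}, partially ordered by (B,n) ≤ (B',m) iff n ≤ m and B ⊆ B', is a tower with level function lev((B_{r_n}(x),n)) = n. -/
/-- For an ultra-metric space `X` and an unbounded strictly increasing sequence
`(r_n)` of nonnegative reals, the set `T_X = {(B_{r n}(x), n) : x ∈ X, n ∈ ℕ}`,
ordered by `(B, n) ≤ (B', m)` iff `n ≤ m` and `B ⊆ B'`, is a tower with level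
function `lev (B_{r n}(x), n) = n + 1`. -/
theorem stmt16 {X : Type*} [MetricSpace X]
    (hu : ∀ x y z : X, dist x z ≤ max (dist x y) (dist y z))
    (r : ℕ → ℝ) (hr : StrictMono r) (hr0 : 0 ≤ r 0) (hub : ∀ C : ℝ, ∃ n : ℕ, C < r n) :
    ∀ le : {p : Set X × ℕ // ∃ x : X, p.1 = Metric.closedBall x (r p.2)} →
           {p : Set X × ℕ // ∃ x : X, p.1 = Metric.closedBall x (r p.2)} → Prop,
      le = (fun a b => a.1.2 ≤ b.1.2 ∧ a.1.1 ⊆ b.1.1) →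
      -- `le` is a partial order:
      IsPartialOrder {p : Set X × ℕ // ∃ x : X, p.1 = Metric.closedBall x (r p.2)} le ∧
      -- well-foundedness:
      WellFounded (fun a b : {p : Set X × ℕ // ∃ x : X, p.1 = Metric.closedBall x (r p.2)} =>
        le a b ∧ a ≠ b) ∧
      -- any two elements have a least upper bound:
      (∀ a b, ∃ s, le a s ∧ le b s ∧ ∀ t, le a t → le b t → le s t) ∧
      -- upper cones are linearly ordered:
      (∀ a b c, le a b → le a c → le b c ∨ le c b) ∧
      -- the level of `(B_{r n}(x), n)` is `n + 1`:
      (∀ a x, le x a → (∀ w, le w x → w = x) →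
        Nat.card {w : {p : Set X × ℕ // ∃ x : X, p.1 = Metric.closedBall x (r p.2)} //
          le x w ∧ le w a} = a.1.2 + 1) := by
  intro le hle
  subst hle
  set T := {p : Set X × ℕ // ∃ x : X, p.1 = Metric.closedBall x (r p.2)} with hT
  have hmono : Monotone r := hr.monotone
  have hnn : ∀ n, 0 ≤ r n := fun n => hr0.trans (hmono (Nat.zero_le n))
  -- key ultrametric inclusion lemma
  have hsub : ∀ (c1 c2 : X) (n m : ℕ), n ≤ m →
      (Metric.closedBall c1 (r n) ∩ Metric.closedBall c2 (r m)).Nonempty →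
      Metric.closedBall c1 (r n) ⊆ Metric.closedBall c2 (r m) := by
    rintro c1 c2 n m hnm ⟨z, hz1, hz2⟩ y hy
    simp only [Metric.mem_closedBall] at hz1 hz2 hy ⊢
    have h12 : dist c1 c2 ≤ r m := by
      have h1 : dist c1 z ≤ r n := by rw [dist_comm]; exact hz1
      exact (hu c1 z c2).trans (max_le (h1.trans (hmono hnm)) hz2)
    exact (hu y c1 c2).trans (max_le (hy.trans (hmono hnm)) h12)
  -- each element's ball is nonempty
  have hne : ∀ a : T, a.1.1.Nonempty := by
    intro a
    obtain ⟨c, hc⟩ := a.2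
    exact ⟨c, hc ▸ Metric.mem_closedBall_self (hnn a.1.2)⟩
  -- antisymmetry in strong form
  have hanti : ∀ a b : T, a.1.2 ≤ b.1.2 ∧ a.1.1 ⊆ b.1.1 →
      b.1.2 ≤ a.1.2 → a = b := by
    rintro a b ⟨h1, h2⟩ h3
    have hnm : a.1.2 = b.1.2 := le_antisymm h1 h3
    obtain ⟨ca, hca⟩ := a.2
    obtain ⟨cb, hcb⟩ := b.2
    have hBA : b.1.1 ⊆ a.1.1 := by
      rw [hca, hcb, hnm]
      refine hsub cb ca b.1.2 b.1.2 le_rfl ⟨ca, ?_, Metric.mem_closedBall_self (hnn _)⟩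
      have : ca ∈ a.1.1 := hca ▸ hnm ▸ Metric.mem_closedBall_self (hnn _)
      exact hcb ▸ h2 this
    have hs : a.1.1 = b.1.1 := le_antisymm h2 hBA
    exact Subtype.ext (Prod.ext hs hnm)
  refine ⟨{ refl := fun a => ⟨le_rfl, subset_rfl⟩,
            trans := fun a b c hab hbc => ⟨hab.1.trans hbc.1, hab.2.trans hbc.2⟩,
            antisymm := fun a b hab hba => hanti a b hab hba.1 }, ?_, ?_, ?_, ?_⟩
  · -- well-founded
    refine Subrelation.wf (r := InvImage (· < ·) (fun a : T => a.1.2)) ?_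
      (InvImage.wf _ Nat.lt_wfRel.wf)
    rintro a b ⟨⟨h1, h2⟩, hne'⟩
    rcases lt_or_eq_of_le h1 with h | h
    · exact h
    · exact absurd (hanti a b ⟨h1, h2⟩ h.ge) hne'
  · -- least upper bounds
    intro a b
    obtain ⟨ca, hca⟩ := a.2
    obtain ⟨cb, hcb⟩ := b.2
    have hex : ∃ k, a.1.2 ≤ k ∧ b.1.2 ≤ k ∧ dist ca cb ≤ r k := by
      obtain ⟨k0, hk0⟩ := hub (dist ca cb)
      exact ⟨max a.1.2 (max b.1.2 k0), le_max_left _ _,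
        (le_max_left _ k0).trans (le_max_right _ _),
        hk0.le.trans (hmono ((le_max_right _ k0).trans (le_max_right _ _)))⟩
    classical
    obtain ⟨hkn, hkm, hkd⟩ := Nat.find_spec hex
    set k := Nat.find hex with hk
    refine ⟨⟨⟨Metric.closedBall ca (r k), k⟩, ca, rfl⟩, ⟨hkn, ?_⟩, ⟨hkm, ?_⟩, ?_⟩
    · show a.1.1 ⊆ Metric.closedBall ca (r k)
      rw [hca]
      exact Metric.closedBall_subset_closedBall (hmono hkn)
    · show b.1.1 ⊆ Metric.closedBall ca (r k)
      rw [hcb]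
      refine hsub cb ca b.1.2 k hkm ⟨cb, Metric.mem_closedBall_self (hnn _), ?_⟩
      simp only [Metric.mem_closedBall]
      rw [dist_comm]; exact hkd
    · rintro t ⟨hj1, hj2⟩ ⟨hj3, hj4⟩
      obtain ⟨ct, hct⟩ := t.2
      have hcaT : ca ∈ t.1.1 := hj2 (hca ▸ Metric.mem_closedBall_self (hnn _))
      have hcbT : cb ∈ t.1.1 := hj4 (hcb ▸ Metric.mem_closedBall_self (hnn _))
      have hm1 : ca ∈ Metric.closedBall ct (r t.1.2) := by rw [← hct]; exact hcaT
      have hm2 : cb ∈ Metric.closedBall ct (r t.1.2) := by rw [← hct]; exact hcbT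
      have hdj : dist ca cb ≤ r t.1.2 := by
        refine (hu ca ct cb).trans (max_le hm1 ?_)
        rw [dist_comm]; exact hm2
      have hkj : k ≤ t.1.2 := Nat.find_min' hex ⟨hj1, hj3, hdj⟩
      refine ⟨hkj, ?_⟩
      show Metric.closedBall ca (r k) ⊆ t.1.1
      rw [hct]
      exact hsub ca ct k t.1.2 hkj
        ⟨ca, Metric.mem_closedBall_self (hnn _), hct ▸ hcaT⟩
  · -- upper cones linear
    rintro a b c ⟨hab1, hab2⟩ ⟨hac1, hac2⟩
    obtain ⟨z, hz⟩ := hne a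
    obtain ⟨cb, hcb⟩ := b.2
    obtain ⟨cc, hcc⟩ := c.2
    rcases le_total b.1.2 c.1.2 with h | h
    · refine Or.inl ⟨h, ?_⟩
      rw [hcb, hcc]
      exact hsub cb cc _ _ h ⟨z, hcb ▸ hab2 hz, hcc ▸ hac2 hz⟩
    · refine Or.inr ⟨h, ?_⟩
      rw [hcc, hcb]
      exact hsub cc cb _ _ h ⟨z, hcc ▸ hac2 hz, hcb ▸ hab2 hz⟩
  · -- levels
    rintro a x ⟨hxa1, hxa2⟩ hmin
    obtain ⟨c, hc⟩ := x.2
    have hx0 : x.1.2 = 0 := by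
      have hw : (⟨⟨Metric.closedBall c (r 0), 0⟩, c, rfl⟩ : T) = x := by
        refine hmin _ ⟨Nat.zero_le _, ?_⟩
        show Metric.closedBall c (r 0) ⊆ x.1.1
        rw [hc]
        exact Metric.closedBall_subset_closedBall (hmono (Nat.zero_le _))
      have := congrArg (fun t : T => t.1.2) hw
      simpa using this.symm
    rw [hx0] at hc
    obtain ⟨ca, hca⟩ := a.2
    set n := a.1.2 with hn
    have hcx : c ∈ x.1.1 := hc ▸ Metric.mem_closedBall_self (hnn 0)
    have hcA : c ∈ a.1.1 := hxa2 hcx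
    have e : {w : T // (x.1.2 ≤ w.1.2 ∧ x.1.1 ⊆ w.1.1) ∧
        (w.1.2 ≤ a.1.2 ∧ w.1.1 ⊆ a.1.1)} ≃ Fin (n + 1) := by
      refine Equiv.ofBijective (fun w => ⟨w.1.1.2, Nat.lt_succ_of_le w.2.2.1⟩) ⟨?_, ?_⟩
      · rintro ⟨w1, ⟨h1, h2⟩, h3, h4⟩ ⟨w2, ⟨g1, g2⟩, g3, g4⟩ hij
        simp only [Fin.mk.injEq] at hij
        obtain ⟨c1, hc1⟩ := w1.2
        obtain ⟨c2, hc2⟩ := w2.2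
        have hcm1 : c ∈ w1.1.1 := h2 hcx
        have hcm2 : c ∈ w2.1.1 := g2 hcx
        have hm1 : c ∈ Metric.closedBall c1 (r w1.1.2) := by rw [← hc1]; exact hcm1
        have hm2 : c ∈ Metric.closedBall c2 (r w2.1.2) := by rw [← hc2]; exact hcm2
        rw [hij] at hm1
        have hset : w1.1.1 = w2.1.1 := by
          rw [hc1, hc2, hij]
          exact le_antisymm
            (hsub c1 c2 _ _ le_rfl ⟨c, hm1, hm2⟩)
            (hsub c2 c1 _ _ le_rfl ⟨c, hm2, hm1⟩)
        exact Subtype.ext (Subtype.ext (Prod.ext hset hij))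
      · rintro ⟨k, hk⟩
        have hkn : k ≤ n := Nat.lt_succ_iff.mp hk
        refine ⟨⟨⟨⟨Metric.closedBall c (r k), k⟩, c, rfl⟩, ⟨⟨?_, ?_⟩, ?_, ?_⟩⟩, rfl⟩
        · rw [hx0]; exact Nat.zero_le _
        · show x.1.1 ⊆ Metric.closedBall c (r k)
          rw [hc]
          exact Metric.closedBall_subset_closedBall (hmono (Nat.zero_le _))
        · exact hkn
        · show Metric.closedBall c (r k) ⊆ a.1.1
          rw [hca]
          exact hsub c ca k n hkn
            ⟨c, Metric.mem_closedBall_self (hnn k), hca ▸ hcA⟩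
    have hcard : Nat.card {w : T // (x.1.2 ≤ w.1.2 ∧ x.1.1 ⊆ w.1.1) ∧
        (w.1.2 ≤ a.1.2 ∧ w.1.1 ⊆ a.1.1)} = n + 1 := by
      rw [Nat.card_congr e]; simp
    exact hcard
end

section
/- Let φ : T₁ → T₂ be an admissible morphism between towers. Then the restriction Φ = φ|[T₁] : [T₁] → [T₂] is an asymorphism of the bases: whenever A ⊆ [T₁] has diameter ≤ 2n then diam(Φ(A)) ≤ 2n, and whenever B ⊆ [T₂] has diameter ≤ 2n then diam(Φ^{-1}(B)) ≤ 2n + 2 (all diameters in the respective path metrics). -/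
open Set

set_option linter.unusedSectionVars false

section helpers
variable {T : Type*} [PartialOrder T]

lemma aux_exists_min_le (hwf : WellFounded ((· < ·) : T → T → Prop)) (y : T) :
    ∃ x : T, IsMin x ∧ x ≤ y := by
  obtain ⟨x, hx, hmin⟩ := hwf.has_min {z | z ≤ y} ⟨y, le_refl y⟩
  exact ⟨x, fun z hz => (eq_of_le_of_not_lt hz (hmin z (hz.trans hx))).ge, hx⟩

lemma aux_finite_of_card_ne_zero {S : Set T} (h : Nat.card S ≠ 0) : S.Finite := by
  by_contra hinf
  exact h (by rw [Nat.card_coe_set_eq]; exact Set.Infinite.ncard hinf)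

lemma aux_card_Icc_mono {x u v : T} (huv : u ≤ v) (hfin : (Set.Icc x v).Finite) :
    Nat.card (Set.Icc x u) ≤ Nat.card (Set.Icc x v) := by
  rw [Nat.card_coe_set_eq, Nat.card_coe_set_eq]
  exact Set.ncard_le_ncard (Set.Icc_subset_Icc_right huv) hfin

lemma aux_eq_of_card_Icc_eq {x u v : T} (hxu : x ≤ u) (hxv : x ≤ v) (hcomp : u ≤ v ∨ v ≤ u)
    (hcard : Nat.card (Set.Icc x u) = Nat.card (Set.Icc x v))
    (hne : Nat.card (Set.Icc x u) ≠ 0) : u = v := by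
  simp only [Nat.card_coe_set_eq] at hcard hne
  rcases hcomp with h | h
  · have hfin : (Set.Icc x v).Finite := by
      by_contra hinf
      rw [Set.Infinite.ncard hinf] at hcard
      exact hne hcard
    have := Set.eq_of_subset_of_ncard_le (Set.Icc_subset_Icc_right h) (le_of_eq hcard.symm) hfin
    have hv : v ∈ Set.Icc x u := this ▸ (⟨hxv, le_rfl⟩ : v ∈ Set.Icc x v)
    exact le_antisymm h hv.2
  · have hfin : (Set.Icc x u).Finite := by
      by_contra hinf
      exact hne (Set.Infinite.ncard hinf)
    have := Set.eq_of_subset_of_ncard_le (Set.Icc_subset_Icc_right h) (le_of_eq hcard) hfin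
    have hu : u ∈ Set.Icc x v := this ▸ (⟨hxu, le_rfl⟩ : u ∈ Set.Icc x u)
    exact le_antisymm hu.2 h

lemma aux_chain_exists_max (hchain : ∀ x : T, IsChain (· ≤ ·) {y : T | x ≤ y})
    {x : T} {F : Set T} (hF : F.Finite) (hne : F.Nonempty) (hsub : ∀ z ∈ F, x ≤ z) :
    ∃ z ∈ F, ∀ w ∈ F, w ≤ z := by
  obtain ⟨z, hz, hmax⟩ : ∃ z ∈ F, ∀ w ∈ F, z ≤ w → z = w :=
    let ⟨z, hz⟩ := Set.Finite.exists_maximal hF hne; ⟨z, hz.1, fun w hw h => le_antisymm h (hz.2 hw h)⟩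
  refine ⟨z, hz, fun w hw => ?_⟩
  by_cases hwz : w = z
  · exact hwz.le
  · rcases hchain x (hsub z hz) (hsub w hw) (fun h => hwz h.symm) with h | h
    · exact le_of_eq (hmax w hw h).symm
    · exact h

lemma aux_exists_card_Icc_eq (hwf : WellFounded ((· < ·) : T → T → Prop))
    (hchain : ∀ x : T, IsChain (· ≤ ·) {y : T | x ≤ y})
    {a s : T} (has : a ≤ s) {m : ℕ} (hm : 1 ≤ m)
    (hpre : ¬ (Set.Icc a s).Finite ∨ m ≤ Nat.card (Set.Icc a s)) :
    ∃ c, a ≤ c ∧ c ≤ s ∧ Nat.card (Set.Icc a c) = m := by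
  simp only [Nat.card_coe_set_eq] at hpre ⊢
  set S : Set T := {z | a ≤ z ∧ z ≤ s ∧ (¬ (Set.Icc a z).Finite ∨ m ≤ (Set.Icc a z).ncard)}
    with hS
  have hsS : s ∈ S := ⟨has, le_rfl, hpre⟩
  have hSne : S.Nonempty := ⟨s, hsS⟩
  set c := hwf.min S hSne with hc
  have hcS : c ∈ S := hwf.min_mem S hSne
  have hmin : ∀ z ∈ S, ¬ z < c := fun z hz => hwf.not_lt_min S hz
  have hfin : (Set.Icc a c).Finite := by
    by_contra hinf
    have hIcc : (Set.Icc a c).Infinite := hinf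
    have hinf' : (Set.Icc a c \ {c}).Infinite := hIcc.diff (Set.finite_singleton c)
    obtain ⟨F, hFsub, hFcard⟩ := hinf'.exists_subset_card_eq (m + 1)
    have hFne : (F : Set T).Nonempty := by
      rw [Finset.coe_nonempty, ← Finset.card_pos, hFcard]; omega
    have hFx : ∀ z ∈ (F : Set T), a ≤ z := fun z hz => (hFsub hz).1.1
    obtain ⟨z, hzF, hzmax⟩ := aux_chain_exists_max hchain F.finite_toSet hFne hFx
    have hzc : z < c := lt_of_le_of_ne (hFsub hzF).1.2 (by
      intro h; exact (hFsub hzF).2 (h ▸ rfl))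
    have hFIcc : (F : Set T) ⊆ Set.Icc a z := fun w hw => ⟨hFx w hw, hzmax w hw⟩
    have hzS : z ∈ S := by
      refine ⟨hFx z hzF, le_trans hzc.le hcS.2.1, ?_⟩
      by_cases hfz : (Set.Icc a z).Finite
      · right
        have := Set.ncard_le_ncard hFIcc hfz
        rw [Set.ncard_coe_finset, hFcard] at this
        omega
      · exact Or.inl hfz
    exact hmin z hzS hzc
  have hkm : m ≤ (Set.Icc a c).ncard := by
    rcases hcS.2.2 with h | h
    · exact absurd hfin h
    · exact h
  rcases eq_or_lt_of_le hkm with heq | hlt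
  · exact ⟨c, hcS.1, hcS.2.1, heq.symm⟩
  · exfalso
    have hcmem : c ∈ Set.Icc a c := ⟨hcS.1, le_rfl⟩
    have hdcard : (Set.Icc a c \ {c}).ncard = (Set.Icc a c).ncard - 1 :=
      Set.ncard_diff_singleton_of_mem hcmem
    have hdne : (Set.Icc a c \ {c}).Nonempty := by
      rw [Set.nonempty_iff_ne_empty]
      intro h
      rw [h, Set.ncard_empty] at hdcard
      omega
    obtain ⟨c', hc'mem, hc'max⟩ := aux_chain_exists_max hchain (hfin.diff (t := {c}))
      hdne (fun z hz => hz.1.1)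
    have hc'c : c' < c := lt_of_le_of_ne hc'mem.1.2 (fun h => hc'mem.2 (h ▸ rfl))
    have hIeq : Set.Icc a c' = Set.Icc a c \ {c} := by
      ext w
      constructor
      · rintro ⟨hw1, hw2⟩
        exact ⟨⟨hw1, le_trans hw2 hc'c.le⟩, fun h => absurd (h ▸ hw2 : c ≤ c')
          (not_le_of_gt hc'c)⟩
      · rintro hw
        exact ⟨hw.1.1, hc'max w hw⟩
    have hc'S : c' ∈ S := by
      refine ⟨hc'mem.1.1, le_trans hc'c.le hcS.2.1, Or.inr ?_⟩
      rw [hIeq, hdcard]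
      omega
    exact hmin c' hc'S hc'c

end helpers

/-- Let `φ : T₁ → T₂` be an admissible morphism between towers (level-preserving,
monotone, with `φ a = φ a'` implying that `a, a'` are parents of a common element,
and with lower image).  Then the restriction of `φ` to the bases is an asymorphism:
subsets of the base of `T₁` of diameter `≤ 2n` have images of diameter `≤ 2n`, and
preimages of subsets of the base of `T₂` of diameter `≤ 2n` have diameter `≤ 2n + 2`
(in the path metrics). -/
theorem stmt17 {T₁ T₂ : Type*} [PartialOrder T₁] [PartialOrder T₂]
    (lev₁ : T₁ → ℕ) (lub₁ : T₁ → T₁ → T₁)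
    (hwf₁ : WellFounded ((· < ·) : T₁ → T₁ → Prop))
    (hlub₁ : ∀ x y : T₁, IsLUB {x, y} (lub₁ x y))
    (hchain₁ : ∀ x : T₁, IsChain (· ≤ ·) {y : T₁ | x ≤ y})
    (hlev₁ : ∀ a x : T₁, IsMin x → x ≤ a → Nat.card (Set.Icc x a) = lev₁ a)
    (lev₂ : T₂ → ℕ) (lub₂ : T₂ → T₂ → T₂)
    (hwf₂ : WellFounded ((· < ·) : T₂ → T₂ → Prop))
    (hlub₂ : ∀ x y : T₂, IsLUB {x, y} (lub₂ x y))
    (hchain₂ : ∀ x : T₂, IsChain (· ≤ ·) {y : T₂ | x ≤ y})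
    (hlev₂ : ∀ a x : T₂, IsMin x → x ≤ a → Nat.card (Set.Icc x a) = lev₂ a)
    (φ : T₁ → T₂)
    -- admissibility:
    (hadm1 : ∀ a : T₁, lev₂ (φ a) = lev₁ a)
    (hadm2 : Monotone φ)
    (hadm3 : ∀ a a' : T₁, φ a = φ a' →
      ∃ v : T₁, a ≤ v ∧ a' ≤ v ∧ lev₁ a + 1 = lev₁ v ∧ lev₁ a' + 1 = lev₁ v)
    (hadm4 : ∀ y ∈ Set.range φ, ∀ z : T₂, z ≤ y → z ∈ Set.range φ) :
    ∀ dT₁ : T₁ → T₁ → ℝ, ∀ dT₂ : T₂ → T₂ → ℝ,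
      dT₁ = (fun x y => 2 * (lev₁ (lub₁ x y) : ℝ) - (lev₁ x : ℝ) - (lev₁ y : ℝ)) →
      dT₂ = (fun x y => 2 * (lev₂ (lub₂ x y) : ℝ) - (lev₂ x : ℝ) - (lev₂ y : ℝ)) →
      (∀ (n : ℕ) (a b : T₁), IsMin a → IsMin b →
        dT₁ a b ≤ 2 * n → dT₂ (φ a) (φ b) ≤ 2 * n) ∧
      (∀ (n : ℕ) (a b : T₁), IsMin a → IsMin b →
        dT₂ (φ a) (φ b) ≤ 2 * n → dT₁ a b ≤ 2 * n + 2) := by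
  intro dT₁ dT₂ hd1 hd2
  subst hd1; subst hd2
  -- minimal elements have level 1
  have hlev1min : ∀ a : T₁, IsMin a → lev₁ a = 1 := by
    intro a ha
    have h := hlev₁ a a ha le_rfl
    rw [Set.Icc_self, Nat.card_coe_set_eq, Set.ncard_singleton] at h
    exact h.symm
  -- φ maps minimal elements to minimal elements
  have hφmin : ∀ a : T₁, IsMin a → IsMin (φ a) := by
    intro a ha z hz
    obtain ⟨x, hx, hxz⟩ := aux_exists_min_le hwf₂ z
    have h1 : Nat.card (Set.Icc x (φ a)) = lev₂ (φ a) := hlev₂ (φ a) x hx (hxz.trans hz)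
    rw [hadm1, hlev1min a ha, Nat.card_coe_set_eq, Set.ncard_eq_one] at h1
    obtain ⟨w, hw⟩ := h1
    have hx' : x = w := by
      have : x ∈ Set.Icc x (φ a) := ⟨le_rfl, hxz.trans hz⟩
      rw [hw] at this; exact this
    have hφ' : φ a = w := by
      have : φ a ∈ Set.Icc x (φ a) := ⟨hxz.trans hz, le_rfl⟩
      rw [hw] at this; exact this
    rw [hφ', ← hx']
    exact hxz
  -- key construction: a common parent above the lub
  have hvblock : ∀ a b : T₁, IsMin a → IsMin b →
      1 ≤ lev₂ (lub₂ (φ a) (φ b)) →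
      (¬ (Set.Icc a (lub₁ a b)).Finite ∨
        lev₂ (lub₂ (φ a) (φ b)) ≤ Nat.card (Set.Icc a (lub₁ a b))) →
      (¬ (Set.Icc b (lub₁ a b)).Finite ∨
        lev₂ (lub₂ (φ a) (φ b)) ≤ Nat.card (Set.Icc b (lub₁ a b))) →
      ∃ v : T₁, lub₁ a b ≤ v ∧ lev₁ v = lev₂ (lub₂ (φ a) (φ b)) + 1 := by
    intro a b ha hb hm hpa hpb
    set s := lub₁ a b with hs
    set t := lub₂ (φ a) (φ b) with ht
    have has : a ≤ s := (hlub₁ a b).1 (Set.mem_insert _ _)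
    have hbs : b ≤ s := (hlub₁ a b).1 (Set.mem_insert_of_mem _ rfl)
    have hφat : φ a ≤ t := (hlub₂ (φ a) (φ b)).1 (Set.mem_insert _ _)
    have hφbt : φ b ≤ t := (hlub₂ (φ a) (φ b)).1 (Set.mem_insert_of_mem _ rfl)
    have htφs : t ≤ φ s := by
      refine (hlub₂ (φ a) (φ b)).2 ?_
      intro z hz
      simp only [Set.mem_insert_iff, Set.mem_singleton_iff] at hz
      rcases hz with rfl | rfl
      · exact hadm2 has
      · exact hadm2 hbs
    have hmne : lev₂ t ≠ 0 := by omega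
    have key : ∀ x : T₁, IsMin x → x ≤ s → φ x ≤ t →
        (¬ (Set.Icc x s).Finite ∨ lev₂ t ≤ Nat.card (Set.Icc x s)) →
        ∃ c, x ≤ c ∧ c ≤ s ∧ φ c = t ∧ lev₁ c = lev₂ t := by
      intro x hx hxs hφxt hpre
      obtain ⟨c, hxc, hcs, hcard⟩ := aux_exists_card_Icc_eq hwf₁ hchain₁ hxs hm hpre
      have hlc : lev₁ c = lev₂ t := by rw [← hlev₁ c x hx hxc, hcard]
      have hφc : φ c = t := by
        have h1 : Nat.card (Set.Icc (φ x) (φ c)) = lev₂ t := by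
          rw [hlev₂ (φ c) (φ x) (hφmin x hx) (hadm2 hxc), hadm1, hlc]
        have h2 : Nat.card (Set.Icc (φ x) t) = lev₂ t := hlev₂ t (φ x) (hφmin x hx) hφxt
        by_cases hct : φ c = t
        · exact hct
        · refine aux_eq_of_card_Icc_eq (hadm2 hxc) hφxt ?_ (h1.trans h2.symm) (by omega)
          exact hchain₂ (φ x) (hadm2 hxc) hφxt hct
      exact ⟨c, hxc, hcs, hφc, hlc⟩
    obtain ⟨c, hac, hcs, hφc, hlc⟩ := key a ha has hφat hpa
    obtain ⟨d, hbd, hds, hφd, hld⟩ := key b hb hbs hφbt hpb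
    obtain ⟨v, hcv, hdv, hlv, _⟩ := hadm3 c d (hφc.trans hφd.symm)
    refine ⟨v, ?_, by omega⟩
    refine (hlub₁ a b).2 ?_
    intro z hz
    simp only [Set.mem_insert_iff, Set.mem_singleton_iff] at hz
    rcases hz with rfl | rfl
    · exact hac.trans hcv
    · exact hbd.trans hdv
  -- forward claim
  have claimF : ∀ a b : T₁, IsMin a → IsMin b →
      lev₂ (lub₂ (φ a) (φ b)) ≤ max (lev₁ (lub₁ a b)) 1 := by
    intro a b ha hb
    set s := lub₁ a b with hs
    set t := lub₂ (φ a) (φ b) with ht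
    have has : a ≤ s := (hlub₁ a b).1 (Set.mem_insert _ _)
    have hbs : b ≤ s := (hlub₁ a b).1 (Set.mem_insert_of_mem _ rfl)
    have hφat : φ a ≤ t := (hlub₂ (φ a) (φ b)).1 (Set.mem_insert _ _)
    have htφs : t ≤ φ s := by
      refine (hlub₂ (φ a) (φ b)).2 ?_
      intro z hz
      simp only [Set.mem_insert_iff, Set.mem_singleton_iff] at hz
      rcases hz with rfl | rfl
      · exact hadm2 has
      · exact hadm2 hbs
    rcases Nat.eq_zero_or_pos (lev₂ t) with h0 | hm
    · omega
    · by_cases hk : lev₁ s = 0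
      · exfalso
        have hinfA : ¬ (Set.Icc a s).Finite := by
          intro hfin
          have hpos : 0 < (Set.Icc a s).ncard := (Set.ncard_pos hfin).mpr ⟨a, le_rfl, has⟩
          have hc0 : Nat.card (Set.Icc a s) = 0 := by rw [hlev₁ s a ha has]; exact hk
          rw [Nat.card_coe_set_eq] at hc0
          omega
        have hinfB : ¬ (Set.Icc b s).Finite := by
          intro hfin
          have hpos : 0 < (Set.Icc b s).ncard := (Set.ncard_pos hfin).mpr ⟨b, le_rfl, hbs⟩
          have hc0 : Nat.card (Set.Icc b s) = 0 := by rw [hlev₁ s b hb hbs]; exact hk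
          rw [Nat.card_coe_set_eq] at hc0
          omega
        obtain ⟨v, hsv, hlv⟩ := hvblock a b ha hb hm (Or.inl hinfA) (Or.inl hinfB)
        have hfinv : (Set.Icc a v).Finite := aux_finite_of_card_ne_zero (by
          rw [hlev₁ v a ha (has.trans hsv)]; omega)
        exact hinfA (hfinv.subset (Set.Icc_subset_Icc_right hsv))
      · have hfin : (Set.Icc (φ a) (φ s)).Finite := aux_finite_of_card_ne_zero (by
          rw [hlev₂ (φ s) (φ a) (hφmin a ha) (hadm2 has), hadm1]; exact hk)
        have hmono := aux_card_Icc_mono (x := φ a) htφs hfin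
        rw [hlev₂ t (φ a) (hφmin a ha) hφat,
          hlev₂ (φ s) (φ a) (hφmin a ha) (hadm2 has), hadm1] at hmono
        exact le_trans hmono (le_max_left _ _)
  -- backward claim
  have claimB : ∀ a b : T₁, IsMin a → IsMin b →
      lev₁ (lub₁ a b) ≤ lev₂ (lub₂ (φ a) (φ b)) + 1 := by
    intro a b ha hb
    set s := lub₁ a b with hs
    set t := lub₂ (φ a) (φ b) with ht
    have has : a ≤ s := (hlub₁ a b).1 (Set.mem_insert _ _)
    have hbs : b ≤ s := (hlub₁ a b).1 (Set.mem_insert_of_mem _ rfl)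
    have hφat : φ a ≤ t := (hlub₂ (φ a) (φ b)).1 (Set.mem_insert _ _)
    have htφs : t ≤ φ s := by
      refine (hlub₂ (φ a) (φ b)).2 ?_
      intro z hz
      simp only [Set.mem_insert_iff, Set.mem_singleton_iff] at hz
      rcases hz with rfl | rfl
      · exact hadm2 has
      · exact hadm2 hbs
    by_cases hk : lev₁ s = 0
    · omega
    · have hfinφ : (Set.Icc (φ a) (φ s)).Finite := aux_finite_of_card_ne_zero (by
        rw [hlev₂ (φ s) (φ a) (hφmin a ha) (hadm2 has), hadm1]; exact hk)
      have hm : 1 ≤ lev₂ t := by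
        rcases Nat.eq_zero_or_pos (lev₂ t) with h0 | h
        · exfalso
          have hfint : (Set.Icc (φ a) t).Finite :=
            hfinφ.subset (Set.Icc_subset_Icc_right htφs)
          have hpos : 0 < (Set.Icc (φ a) t).ncard :=
            (Set.ncard_pos hfint).mpr ⟨φ a, le_rfl, hφat⟩
          have hc0 : Nat.card (Set.Icc (φ a) t) = 0 := by
            rw [hlev₂ t (φ a) (hφmin a ha) hφat]; exact h0
          rw [Nat.card_coe_set_eq] at hc0
          omega
        · exact h
      by_cases hmk : lev₁ s ≤ lev₂ t
      · omega
      · obtain ⟨v, hsv, hlv⟩ := hvblock a b ha hb hm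
          (Or.inr (by rw [← hs, ← ht, hlev₁ s a ha has]; omega))
          (Or.inr (by rw [← hs, ← ht, hlev₁ s b hb hbs]; omega))
        rw [← ht] at hlv
        have hfinv : (Set.Icc a v).Finite := aux_finite_of_card_ne_zero (by
          rw [hlev₁ v a ha (has.trans hsv)]; omega)
        have hmono := aux_card_Icc_mono (x := a) hsv hfinv
        rw [hlev₁ s a ha has, hlev₁ v a ha (has.trans hsv)] at hmono
        omega
  constructor
  · intro n a b ha hb hle
    have h1 := hlev1min a ha
    have h2 := hlev1min b hb
    have hle' : 2 * (lev₁ (lub₁ a b) : ℝ) - (lev₁ a : ℝ) - (lev₁ b : ℝ) ≤ 2 * n := hle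
    rw [h1, h2] at hle'
    have hk : lev₁ (lub₁ a b) ≤ n + 1 := by
      have h : (lev₁ (lub₁ a b) : ℝ) ≤ (n : ℝ) + 1 := by push_cast at hle'; linarith
      exact_mod_cast h
    have hm : lev₂ (lub₂ (φ a) (φ b)) ≤ n + 1 :=
      le_trans (claimF a b ha hb) (by omega)
    show 2 * (lev₂ (lub₂ (φ a) (φ b)) : ℝ) - (lev₂ (φ a) : ℝ) - (lev₂ (φ b) : ℝ) ≤ 2 * n
    rw [hadm1, hadm1, h1, h2]
    have h : (lev₂ (lub₂ (φ a) (φ b)) : ℝ) ≤ (n : ℝ) + 1 := by exact_mod_cast hm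
    push_cast
    linarith
  · intro n a b ha hb hle
    have h1 := hlev1min a ha
    have h2 := hlev1min b hb
    have hle' : 2 * (lev₂ (lub₂ (φ a) (φ b)) : ℝ) - (lev₂ (φ a) : ℝ) - (lev₂ (φ b) : ℝ)
        ≤ 2 * n := hle
    rw [hadm1, hadm1, h1, h2] at hle'
    have hm : lev₂ (lub₂ (φ a) (φ b)) ≤ n + 1 := by
      have h : (lev₂ (lub₂ (φ a) (φ b)) : ℝ) ≤ (n : ℝ) + 1 := by push_cast at hle'; linarith
      exact_mod_cast h
    have hk : lev₁ (lub₁ a b) ≤ n + 2 := le_trans (claimB a b ha hb) (by omega)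
    show 2 * (lev₁ (lub₁ a b) : ℝ) - (lev₁ a : ℝ) - (lev₁ b : ℝ) ≤ 2 * n + 2
    rw [h1, h2]
    have h : (lev₁ (lub₁ a b) : ℝ) ≤ (n : ℝ) + 2 := by exact_mod_cast hk
    push_cast
    linarith
end

section
/- Every asymptotically zero-dimensional metric space (X,d) admits an ultrametric ρ on X such that the identity map (X,d) → (X,ρ) is a bijective asymorphism (both it and its inverse are bornologous); moreover, every bijective isometry of (X,d) is also an isometry of (X,ρ), so if (X,d) is homogeneous then (X,ρ) is a homogeneous ultra-metric space. -/
open Relation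

private def chainRel {X : Type*} [PseudoMetricSpace X] (D : ℝ) : X → X → Prop :=
  ReflTransGen (fun a b => dist a b ≤ D)

private lemma chainRel_symm {X : Type*} [PseudoMetricSpace X] {D : ℝ} {x y : X}
    (h : chainRel D x y) : chainRel D y x :=
  by
    letI : Std.Symm (fun a b : X => dist a b ≤ D) := ⟨fun a b (h : dist a b ≤ D) => by rwa [dist_comm] at h⟩
    exact Std.Symm.symm (r := ReflTransGen (fun a b : X => dist a b ≤ D)) _ _ h

private lemma chainRel_mono {X : Type*} [PseudoMetricSpace X] {D D' : ℝ} (hD : D ≤ D')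
    {x y : X} (h : chainRel D x y) : chainRel D' x y :=
  ReflTransGen.mono (fun a b (hab : dist a b ≤ D) => hab.trans hD) _ _ h

private def cS {X : Type*} [PseudoMetricSpace X] (x y : X) : Set ℝ :=
  {D : ℝ | 0 < D ∧ chainRel D x y}

private lemma cS_nonempty {X : Type*} [PseudoMetricSpace X] (x y : X) : (cS x y).Nonempty :=
  ⟨dist x y + 1, by positivity, ReflTransGen.single (by linarith)⟩

private lemma cS_bddBelow {X : Type*} [PseudoMetricSpace X] (x y : X) : BddBelow (cS x y) :=
  ⟨0, fun _ hD => hD.1.le⟩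

private noncomputable def cρ {X : Type*} [PseudoMetricSpace X] (x y : X) : ℝ :=
  sInf (cS x y)

private lemma cρ_le {X : Type*} [PseudoMetricSpace X] {x y : X} {D : ℝ} (hD : D ∈ cS x y) :
    cρ x y ≤ D := csInf_le (cS_bddBelow x y) hD

private lemma cS_symm {X : Type*} [PseudoMetricSpace X] (x y : X) : cS x y = cS y x := by
  ext D
  exact ⟨fun h => ⟨h.1, chainRel_symm h.2⟩, fun h => ⟨h.1, chainRel_symm h.2⟩⟩

private lemma cρ_trans {X : Type*} [PseudoMetricSpace X] (x y z : X) :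
    cρ x z ≤ max (cρ x y) (cρ y z) := by
  refine le_of_forall_pos_le_add fun ε hε => ?_
  obtain ⟨D1, hD1, hD1lt⟩ := (csInf_lt_iff (cS_bddBelow x y) (cS_nonempty x y)).1
    (lt_add_of_pos_right (cρ x y) hε)
  obtain ⟨D2, hD2, hD2lt⟩ := (csInf_lt_iff (cS_bddBelow y z) (cS_nonempty y z)).1
    (lt_add_of_pos_right (cρ y z) hε)
  have hmem : max D1 D2 ∈ cS x z :=
    ⟨lt_max_of_lt_left hD1.1,
      (chainRel_mono (le_max_left _ _) hD1.2).trans (chainRel_mono (le_max_right _ _) hD2.2)⟩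
  calc cρ x z ≤ max D1 D2 := cρ_le hmem
    _ ≤ max (cρ x y + ε) (cρ y z + ε) := max_le_max hD1lt.le hD2lt.le
    _ = max (cρ x y) (cρ y z) + ε := (max_add_add_right _ _ _).symm.symm

private lemma chainRel_stay {X : Type*} [MetricSpace X] {D : ℝ} {𝒰 : Set (Set X)}
    (hcover : ⋃₀ 𝒰 = Set.univ)
    (hsep : ∀ U ∈ 𝒰, ∀ V ∈ 𝒰, U ≠ V → ∀ u ∈ U, ∀ v ∈ V, D < dist u v)
    {x y : X} (h : chainRel D x y) {U : Set X} (hU : U ∈ 𝒰) (hxU : x ∈ U) : y ∈ U := by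
  induction h with
  | refl => exact hxU
  | @tail b c hxb hbc ih =>
    have hc : c ∈ ⋃₀ 𝒰 := by rw [hcover]; trivial
    obtain ⟨V, hV, hcV⟩ := hc
    by_cases hUV : U = V
    · exact hUV ▸ hcV
    · exact absurd hbc (not_le.2 (hsep U hU V hV hUV b ih c hcV))

/-- Every asymptotically zero-dimensional metric space `(X, d)` admits an ultrametric
`ρ` such that the identity map `(X, d) → (X, ρ)` is a bijective asymorphism (it and
its inverse are bornologous), and every bijective isometry of `(X, d)` is an isometry
of `(X, ρ)`; in particular if `(X, d)` is homogeneous then `(X, ρ)` is a homogeneous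
ultra-metric space. -/
theorem stmt18 {X : Type*} [MetricSpace X]
    (hzero : ∀ D : ℝ, 0 < D → ∃ 𝒰 : Set (Set X),
      (⋃₀ 𝒰 = Set.univ) ∧
      (∃ M : ℝ, ∀ U ∈ 𝒰, EMetric.diam U ≤ ENNReal.ofReal M) ∧
      (∀ U ∈ 𝒰, ∀ V ∈ 𝒰, U ≠ V → ∀ u ∈ U, ∀ v ∈ V, D < dist u v)) :
    ∃ ρ : X → X → ℝ,
      -- `ρ` is an ultrametric:
      (∀ x y : X, 0 ≤ ρ x y) ∧
      (∀ x y : X, ρ x y = 0 ↔ x = y) ∧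
      (∀ x y : X, ρ x y = ρ y x) ∧
      (∀ x y z : X, ρ x z ≤ max (ρ x y) (ρ y z)) ∧
      -- the identity map is a bijective asymorphism:
      (∀ ε : ℝ, ∃ δ : ℝ, ∀ x y : X, dist x y ≤ ε → ρ x y ≤ δ) ∧
      (∀ ε : ℝ, ∃ δ : ℝ, ∀ x y : X, ρ x y ≤ ε → dist x y ≤ δ) ∧
      -- every bijective isometry of `(X, d)` is an isometry of `(X, ρ)`:
      (∀ f : X → X, Function.Bijective f → (∀ x y : X, dist (f x) (f y) = dist x y) →
        ∀ x y : X, ρ (f x) (f y) = ρ x y) := by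
  classical
  refine ⟨fun x y => if x = y then 0 else max (cρ x y) 1, ?_, ?_, ?_, ?_, ?_, ?_, ?_⟩
  · intro x y
    by_cases h : x = y
    · simp [h]
    · simp only [if_neg h]
      exact le_trans zero_le_one (le_max_right _ _)
  · intro x y
    by_cases h : x = y
    · simp [h]
    · simp only [if_neg h]
      constructor
      · intro h0
        exact absurd h0 (ne_of_gt (lt_of_lt_of_le zero_lt_one (le_max_right _ _)))
      · intro h0; exact absurd h0 h
  · intro x y
    by_cases h : x = y
    · simp [h]
    · have h' : ¬ (y = x) := fun hh => h hh.symm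
      simp only [if_neg h, if_neg h']
      rw [show cρ x y = cρ y x from by unfold cρ; rw [cS_symm]]
  · intro x y z
    by_cases hxz : x = z
    · simp only [if_pos hxz]
      refine le_max_of_le_left ?_
      by_cases hxy : x = y
      · simp [hxy]
      · simp only [if_neg hxy]
        exact le_trans zero_le_one (le_max_right _ _)
    · simp only [if_neg hxz]
      by_cases hxy : x = y
      · subst hxy
        simp only [if_neg hxz]
        exact le_max_of_le_right (le_refl _)
      · by_cases hyz : y = z
        · subst hyz
          simp only [if_neg hxy]
          exact le_max_of_le_left (le_refl _)
        · simp only [if_neg hxy, if_neg hyz]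
          rw [max_max_max_comm]
          refine max_le_max (cρ_trans x y z) ?_
          simp
  · intro ε
    refine ⟨max ε 1, fun x y hxy => ?_⟩
    by_cases h : x = y
    · simp only [if_pos h]
      exact le_trans zero_le_one (le_max_right _ _)
    · simp only [if_neg h]
      have hε : 0 < ε := lt_of_lt_of_le (dist_pos.2 h) hxy
      exact max_le_max (cρ_le ⟨hε, ReflTransGen.single hxy⟩) le_rfl
  · intro ε
    obtain ⟨𝒰, hcover, ⟨M, hM⟩, hsep⟩ := hzero (max ε 0 + 1) (by positivity)
    refine ⟨max M 0, fun x y hxy => ?_⟩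
    by_cases h : x = y
    · simp [h]
    · simp only [if_neg h] at hxy
      have h1 : cρ x y < max ε 0 + 1 := by
        have : cρ x y ≤ ε := le_trans (le_max_left _ _) hxy
        have : cρ x y ≤ max ε 0 := le_trans this (le_max_left _ _)
        linarith
      obtain ⟨D, ⟨hD0, hchain⟩, hDlt⟩ :=
        (csInf_lt_iff (cS_bddBelow x y) (cS_nonempty x y)).1 h1
      have hx : x ∈ ⋃₀ 𝒰 := by rw [hcover]; trivial
      obtain ⟨U, hU, hxU⟩ := hx
      have hyU : y ∈ U :=
        chainRel_stay hcover hsep (chainRel_mono hDlt.le hchain) hU hxU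
      have hedist : ENNReal.ofReal (dist x y) ≤ ENNReal.ofReal (max M 0) := by
        rw [← edist_dist]
        exact (EMetric.edist_le_diam_of_mem hxU hyU).trans
          ((hM U hU).trans (ENNReal.ofReal_le_ofReal (le_max_left M 0)))
      exact (ENNReal.ofReal_le_ofReal_iff (le_max_right M 0)).1 hedist
  · intro f hf hiso x y
    obtain ⟨g, hgl, hgr⟩ := Function.bijective_iff_has_inverse.1 hf
    have hgiso : ∀ a b : X, dist (g a) (g b) = dist a b := by
      intro a b
      rw [← hiso (g a) (g b), hgr a, hgr b]
    have hSeq : cS (f x) (f y) = cS x y := by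
      ext D
      constructor
      · rintro ⟨hD0, hch⟩
        refine ⟨hD0, ?_⟩
        have : ReflTransGen (fun a b => dist a b ≤ D) (g (f x)) (g (f y)) := ReflTransGen.lift (r := fun a b => dist a b ≤ D)
          (p := fun a b => dist a b ≤ D) g
          (fun a b hab => show dist (g a) (g b) ≤ D by rw [hgiso]; exact hab) _ _ hch
        rwa [hgl x, hgl y] at this
      · rintro ⟨hD0, hch⟩
        exact ⟨hD0, ReflTransGen.lift (p := fun a b => dist a b ≤ D) f
          (fun a b hab => show dist (f a) (f b) ≤ D by rw [hiso]; exact hab) _ _ hch⟩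
    by_cases h : x = y
    · simp [h]
    · have h' : ¬ (f x = f y) := fun hh => h (hf.1 hh)
      simp only [if_neg h, if_neg h']
      unfold cρ
      rw [hSeq]
end
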